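/- arXiv:1902.09540 — 7 statements merged into one kernel-verified Lean document; each statement's English description precedes it below -/
import Mathlib

section
/- Let $r \ge 1$ be an integer, $\beta > -1$ a real number, and define $p_n(x;\beta) = \sum_{k=0}^n \binom{n}{k} \frac{(-1)^{n-k}}{\Gamma(\frac{\beta+k}{r}+1)} x^k$. Then for every integer $j$ with $1 \le j \le n$, $\int_0^\infty x^{rj-1} p_n(x;\beta)\, x^\beta e^{-x^r}\, dx = 0$. -/
open Finset Polynomial MeasureTheory Real Set

lemma fwdDiff_iter_zero_fun {M G : Type*} [AddCommMonoid M] [AddCommGroup G] (h : M) (n : ℕ) :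
    (fwdDiff h)^[n] (0 : M → G) = 0 := by
  induction n with
  | zero => rfl
  | succ n ih =>
    rw [Function.iterate_succ_apply]
    have : fwdDiff h (0 : M → G) = 0 := by funext x; simp [fwdDiff]
    rw [this, ih]

lemma key (n : ℕ) (P : Polynomial ℝ) (hP : P.natDegree < n) :
    (fwdDiff (1:ℕ))^[n] (fun k : ℕ => P.eval (k : ℝ)) = 0 := by
  induction n generalizing P with
  | zero => omega
  | succ n ih =>
    rw [Function.iterate_succ_apply]
    set Q : Polynomial ℝ := P.comp (X + 1) - P with hQ
    have hdiff : (fwdDiff (1:ℕ)) (fun k : ℕ => P.eval (k : ℝ)) = fun k : ℕ => Q.eval (k : ℝ) := by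
      funext k
      simp only [fwdDiff, hQ, eval_sub, eval_comp, eval_add, eval_X, eval_one]
      push_cast
      ring
    rw [hdiff]
    by_cases hQ0 : Q = 0
    · rw [hQ0]; simp only [eval_zero]; exact fwdDiff_iter_zero_fun (1 : ℕ) n (G := ℝ)
    · apply ih
      have hP0 : P ≠ 0 := by
        intro h; apply hQ0; simp [hQ, h]
      have hX1 : (X + 1 : Polynomial ℝ).natDegree = 1 := by
        simpa using natDegree_X_add_C (1 : ℝ)
      have hlc : (P.comp (X + 1)).leadingCoeff = P.leadingCoeff := by
        rw [leadingCoeff_comp (by rw [hX1]; norm_num)]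
        have : (X + 1 : Polynomial ℝ).leadingCoeff = 1 := by
          have h := monic_X_add_C (1 : ℝ); rw [map_one] at h; exact h
        rw [this, one_pow, mul_one]
      have hc0 : P.comp (X + 1) ≠ 0 := by
        intro h
        apply hP0
        have := hlc
        rw [h, leadingCoeff_zero] at this
        exact leadingCoeff_eq_zero.mp this.symm
      have hnd : (P.comp (X + 1)).natDegree = P.natDegree := by
        rw [natDegree_comp, hX1, mul_one]
      have hdeg : (P.comp (X + 1)).degree = P.degree := by
        rw [degree_eq_natDegree hc0, degree_eq_natDegree hP0, hnd]
      have hlt : Q.degree < P.degree := hdeg ▸ degree_sub_lt hdeg hc0 hlc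
      have := natDegree_lt_natDegree hQ0 hlt
      omega

lemma Gamma_add_nat (m : ℕ) (w : ℝ) (hw : 0 < w) :
    Real.Gamma (w + m) = Real.Gamma w * ∏ i ∈ Finset.range m, (w + i) := by
  induction m with
  | zero => simp
  | succ m ih =>
    have h1 : w + (m + 1 : ℕ) = (w + m) + 1 := by push_cast; ring
    rw [h1, Real.Gamma_add_one (by positivity), ih, Finset.prod_range_succ]
    ring

/-- The polynomial `p_n(x; β)` for the Laguerre-Angelesco polynomials on an `r`-star. -/
noncomputable def laPoly (r n : ℕ) (β : ℝ) (x : ℝ) : ℝ :=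
  ∑ k ∈ Finset.range (n + 1),
    (n.choose k : ℝ) * (-1) ^ (n - k) / Real.Gamma ((β + k) / r + 1) * x ^ k

theorem stmt_3 (r n : ℕ) (hr : 1 ≤ r) (β : ℝ) (hβ : β > -1) (j : ℕ) (hj1 : 1 ≤ j)
    (hjn : j ≤ n) :
    ∫ x in Set.Ioi (0 : ℝ),
      x ^ (r * j - 1) * laPoly r n β x * x ^ β * Real.exp (-(x ^ r)) = 0 := by
  have hr0 : (0:ℝ) < r := Nat.cast_pos.mpr hr
  have hrne : (r:ℝ) ≠ 0 := ne_of_gt hr0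
  have hr1 : (1:ℝ) ≤ (r:ℝ) := by exact_mod_cast hr
  set c : ℕ → ℝ := fun k => (n.choose k : ℝ) * (-1) ^ (n - k) / Real.Gamma ((β + k) / r + 1)
    with hc
  set e : ℕ → ℝ := fun k => ((r * j - 1 + k : ℕ) : ℝ) + β with he
  have hrj1 : 1 ≤ r * j := Nat.one_le_iff_ne_zero.mpr (by positivity)
  have hecast : ∀ k : ℕ, e k = (r:ℝ) * j - 1 + k + β := by
    intro k
    rw [he]
    push_cast [Nat.cast_sub hrj1]
    ring
  have he1 : ∀ k : ℕ, -1 < e k := by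
    intro k
    have : (0:ℝ) ≤ ((r * j - 1 + k : ℕ) : ℝ) := Nat.cast_nonneg _
    simp only [he]
    linarith
  -- Step 1: rewrite the integrand as a finite sum
  have h1 : ∀ x ∈ Set.Ioi (0:ℝ),
      x ^ (r * j - 1) * laPoly r n β x * x ^ β * Real.exp (-(x ^ r)) =
      ∑ k ∈ Finset.range (n + 1), c k * (x ^ (e k) * Real.exp (-x ^ (r:ℝ))) := by
    intro x hx
    have hx0 : (0:ℝ) < x := hx
    rw [laPoly, Finset.mul_sum, Finset.sum_mul, Finset.sum_mul]
    refine Finset.sum_congr rfl fun k _ => ?_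
    have hxe : x ^ (e k) = x ^ (r * j - 1) * x ^ (k:ℕ) * x ^ β := by
      rw [he]
      rw [Real.rpow_add hx0, Real.rpow_natCast]
      rw [← Real.rpow_natCast x (r * j - 1 + k), Real.rpow_natCast]
      rw [pow_add]
    have hxr : x ^ (r:ℝ) = x ^ (r:ℕ) := Real.rpow_natCast x r
    rw [hxe, hxr]
    ring
  rw [setIntegral_congr_fun measurableSet_Ioi h1]
  have hint : ∀ k ∈ Finset.range (n + 1),
      IntegrableOn (fun x => c k * (x ^ (e k) * Real.exp (-x ^ (r:ℝ)))) (Set.Ioi 0) := by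
    intro k _
    exact (integrableOn_rpow_mul_exp_neg_rpow (he1 k) hr0).const_mul _
  rw [integral_finset_sum _ hint]
  -- Step 2: evaluate each integral
  have h2 : ∀ k, ∫ x in Set.Ioi (0:ℝ), c k * (x ^ (e k) * Real.exp (-x ^ (r:ℝ))) =
      c k * ((1 / r) * Real.Gamma ((e k + 1) / r)) := by
    intro k
    rw [integral_const_mul, integral_rpow_mul_exp_neg_rpow hr0 (he1 k)]
  simp_rw [h2]
  -- Step 3: Gamma manipulation
  set m := j - 1 with hm
  have hjm : j = m + 1 := (Nat.succ_pred_eq_of_pos hj1).symm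
  have harg : ∀ k : ℕ, (e k + 1) / r = ((β + k) / r + 1) + (m:ℝ) := by
    intro k
    have hjr : (j:ℝ) = (m:ℝ) + 1 := by exact_mod_cast hjm
    rw [hecast, hjr]
    field_simp
    ring
  have hw : ∀ k : ℕ, 0 < (β + k) / r + 1 := by
    intro k
    have h1 : -(r:ℝ) < β + k := by
      have : (0:ℝ) ≤ (k:ℝ) := Nat.cast_nonneg _
      nlinarith
    have h2 : (-1:ℝ) < (β + k) / r := by
      rw [lt_div_iff₀ hr0]
      nlinarith [(Nat.cast_nonneg k : (0:ℝ) ≤ k)]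
    linarith
  have h3 : ∀ k : ℕ, c k * ((1 / r) * Real.Gamma ((e k + 1) / r)) =
      (1 / r) * (((-1:ℝ)) ^ (n - k) * (n.choose k : ℝ) *
        ∏ i ∈ Finset.range m, ((β + k) / r + 1 + i)) := by
    intro k
    rw [harg k, Gamma_add_nat m _ (hw k)]
    simp only [hc]
    set g := Real.Gamma ((β + (k:ℝ)) / r + 1) with hg
    set p := ∏ i ∈ Finset.range m, ((β + (k:ℝ)) / r + 1 + (i:ℝ)) with hp
    have hG : g ≠ 0 := ne_of_gt (Real.Gamma_pos_of_pos (hw k))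
    field_simp
  simp_rw [h3]
  rw [← Finset.mul_sum]
  -- Step 4: the sum is an n-th finite difference of a polynomial of degree < n
  set P : Polynomial ℝ := ∏ i ∈ Finset.range m,
    (Polynomial.C (1 / (r:ℝ)) * Polynomial.X + Polynomial.C (β / r + 1 + i)) with hP
  have hPeval : ∀ k : ℕ, P.eval (k:ℝ) = ∏ i ∈ Finset.range m, ((β + k) / r + 1 + i) := by
    intro k
    rw [hP, Polynomial.eval_prod]
    refine Finset.prod_congr rfl fun i _ => ?_
    simp only [Polynomial.eval_add, Polynomial.eval_mul, Polynomial.eval_C, Polynomial.eval_X]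
    field_simp
    ring
  have hPdeg : P.natDegree < n := by
    have : P.natDegree ≤ m := by
      rw [hP]
      refine le_trans (Polynomial.natDegree_prod_le _ _) ?_
      refine le_trans (Finset.sum_le_card_nsmul _ _ 1 fun i _ => ?_) (by simp)
      exact Polynomial.natDegree_linear_le
    omega
  have hsum : ∑ k ∈ Finset.range (n + 1),
      ((-1:ℝ)) ^ (n - k) * (n.choose k : ℝ) * ∏ i ∈ Finset.range m, ((β + k) / r + 1 + i) = 0 := by
    have := fwdDiff_iter_eq_sum_shift (M := ℕ) (G := ℝ) (h := 1)
      (fun k : ℕ => P.eval (k:ℝ)) n 0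
    rw [key n P hPdeg] at this
    simp only [Pi.zero_apply] at this
    rw [← Finset.sum_congr rfl fun k _ => by
      rw [← hPeval k]]
    have h0 : ∀ k ∈ Finset.range (n+1),
        (((-1:ℤ)) ^ (n - k) * (n.choose k : ℤ)) • P.eval ((0 + k • 1 : ℕ) : ℝ) =
        ((-1:ℝ)) ^ (n - k) * (n.choose k : ℝ) * P.eval (k:ℝ) := by
      intro k _
      simp [zsmul_eq_mul]
    rw [← Finset.sum_congr rfl h0]
    exact this.symm
  rw [hsum, mul_zero]
end

section
/- Let $\beta > -1$, $r \ge 1$, and let $p_n(x;\beta) = \sum_{k=0}^n \binom{n}{k} \frac{(-1)^{n-k}}{\Gamma(\frac{\beta+k}{r}+1)} x^k$. Then all zeros of $p_n(\cdot;\beta)$ are simple and lie in the open interval $(0,\infty)$. -/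
open Polynomial Finset Real MeasureTheory Set


theorem fd_lemma : ∀ (n : ℕ) (P : Polynomial ℝ), 1 ≤ n → P.natDegree < n →
    ∑ k ∈ Finset.range (n + 1), ((-1 : ℝ)) ^ (n - k) * (n.choose k : ℝ) * P.eval (k : ℝ) = 0 := by
  intro n
  induction n with
  | zero => intro P h; omega
  | succ n ih =>
    intro P _ hP
    rcases Nat.eq_zero_or_pos n with hn | hn
    · subst hn
      obtain ⟨c, rfl⟩ := Polynomial.natDegree_eq_zero.mp (Nat.lt_one_iff.mp hP)
      simp [Finset.sum_range_succ]
    · have key : ∀ k ∈ Finset.range (n + 2), ((-1 : ℝ)) ^ (n + 1 - k) * ((n+1).choose k : ℝ) * P.eval (k : ℝ)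
          = ((-1 : ℝ)) ^ (n + 1 - k) * (n.choose k : ℝ) * P.eval (k : ℝ)
            + ((-1 : ℝ)) ^ (n + 1 - k) * ((if k = 0 then 0 else n.choose (k-1)) : ℝ) * P.eval (k : ℝ) := by
        intro k _
        rcases Nat.eq_zero_or_pos k with rfl | hk
        · simp
        · rw [if_neg (by omega), ← Nat.succ_pred_eq_of_pos hk, Nat.succ_sub_one, Nat.choose_succ_succ]
          push_cast; ring
      rw [Finset.sum_congr rfl key, Finset.sum_add_distrib]
      have h1 : ∑ k ∈ Finset.range (n + 2), ((-1 : ℝ)) ^ (n + 1 - k) * (n.choose k : ℝ) * P.eval (k : ℝ)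
          = -∑ k ∈ Finset.range (n + 1), ((-1 : ℝ)) ^ (n - k) * (n.choose k : ℝ) * P.eval (k : ℝ) := by
        rw [Finset.sum_range_succ, Nat.choose_eq_zero_of_lt (by omega)]
        rw [← Finset.sum_neg_distrib]
        simp only [Nat.cast_zero, mul_zero, zero_mul, add_zero]
        refine Finset.sum_congr rfl fun k hk => ?_
        have hkn : k ≤ n := by simpa [Nat.lt_succ_iff] using hk
        have : n + 1 - k = (n - k) + 1 := by omega
        rw [this, pow_succ]; ring
      have h2 : ∑ k ∈ Finset.range (n + 2), ((-1 : ℝ)) ^ (n + 1 - k) * ((if k = 0 then 0 else n.choose (k-1)) : ℝ) * P.eval (k : ℝ)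
          = ∑ k ∈ Finset.range (n + 1), ((-1 : ℝ)) ^ (n - k) * (n.choose k : ℝ) * P.eval ((k : ℝ) + 1) := by
        have hs := Finset.sum_range_succ' (fun k => ((-1 : ℝ)) ^ (n + 1 - k) * ((if k = 0 then 0 else n.choose (k-1)) : ℝ) * P.eval (k : ℝ)) (n+1)
        rw [hs]
        simp only [reduceIte, if_pos rfl, mul_zero, zero_mul, add_zero, Nat.cast_zero]
        refine Finset.sum_congr rfl fun k hk => ?_
        rw [if_neg (by omega)]
        have : n + 1 - (k + 1) = n - k := by omega
        rw [Nat.add_sub_cancel, this]; push_cast; ring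
      rw [h1, h2]
      set Q : Polynomial ℝ := P.comp (X + C 1) - P with hQ
      have hQeval : ∀ x : ℝ, Q.eval x = P.eval (x + 1) - P.eval x := by
        intro x; simp [hQ]
      have hsum : -∑ k ∈ Finset.range (n + 1), ((-1 : ℝ)) ^ (n - k) * (n.choose k : ℝ) * P.eval (k : ℝ)
          + ∑ k ∈ Finset.range (n + 1), ((-1 : ℝ)) ^ (n - k) * (n.choose k : ℝ) * P.eval ((k : ℝ) + 1)
          = ∑ k ∈ Finset.range (n + 1), ((-1 : ℝ)) ^ (n - k) * (n.choose k : ℝ) * Q.eval (k : ℝ) := by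
        rw [← Finset.sum_neg_distrib, ← Finset.sum_add_distrib]
        refine Finset.sum_congr rfl fun k _ => ?_
        rw [hQeval]; ring
      rw [hsum]
      refine ih Q hn ?_
      rcases eq_or_ne Q 0 with h0 | h0
      · rw [h0]; simpa using hn
      rcases Nat.eq_zero_or_pos P.natDegree with hd0 | hd0
      · obtain ⟨c, rfl⟩ := Polynomial.natDegree_eq_zero.mp hd0
        exfalso; apply h0; simp [hQ]
      have hP0 : P ≠ 0 := fun h => by simp [h] at hd0
      have hXC : (X + C (1:ℝ)).natDegree = 1 := natDegree_X_add_C 1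
      have hcomp : (P.comp (X + C 1)).natDegree = P.natDegree := by
        rw [natDegree_comp, hXC, mul_one]
      have hcomp0 : P.comp (X + C 1) ≠ 0 := by
        intro h; rw [h] at hcomp; simp at hcomp; omega
      have hlc : (P.comp (X + C 1)).leadingCoeff = P.leadingCoeff := by
        rw [leadingCoeff_comp (by rw [hXC]; omega), (monic_X_add_C (1:ℝ)).leadingCoeff, one_pow, mul_one]
      have hdc : (P.comp (X + C 1)).degree = P.degree := by
        rw [degree_eq_natDegree hcomp0, degree_eq_natDegree hP0, hcomp]
      have hdeg : Q.degree < P.degree := by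
        rw [hQ, ← hdc]
        exact degree_sub_lt hdc hcomp0 hlc
      have := Polynomial.natDegree_lt_natDegree h0 hdeg
      omega

theorem gamma_ratio (c : ℝ) (hc : -1 < c) (j : ℕ) :
    Real.Gamma (c + (j + 1)) = Real.Gamma (c + 1) * ∏ i ∈ Finset.range j, (c + (i + 1)) := by
  induction j with
  | zero => simp
  | succ j ih =>
    have h1 : c + ((j:ℝ) + 1 + 1) = (c + ((j:ℝ)+1)) + 1 := by push_cast; ring
    have hne : c + ((j:ℝ) + 1) ≠ 0 := by
      have : (0:ℝ) ≤ j := Nat.cast_nonneg j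
      nlinarith
    rw [Finset.prod_range_succ, ← mul_assoc, ← ih]
    push_cast
    rw [h1, Real.Gamma_add_one hne]
    ring

theorem orth_sum (r n : ℕ) (hr : 1 ≤ r) (β : ℝ) (hβ : β > -1) (j : ℕ) (hj : j < n) :
    ∑ k ∈ Finset.range (n + 1),
      (n.choose k : ℝ) * (-1) ^ (n - k) / Real.Gamma ((β + k) / r + 1)
        * Real.Gamma ((β + k) / r + (j + 1)) = 0 := by
  have hrpos : (0:ℝ) < r := by exact_mod_cast hr
  set P : Polynomial ℝ := ∏ i ∈ Finset.range j, (C (1/(r:ℝ)) * X + C (β/r + (i + 1))) with hPdef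
  have hdeg : P.natDegree < n := by
    calc P.natDegree ≤ ∑ i ∈ Finset.range j, (C (1/(r:ℝ)) * X + C (β/r + ((i:ℝ) + 1))).natDegree :=
          natDegree_prod_le _ _
      _ ≤ ∑ _i ∈ Finset.range j, 1 := by
          refine Finset.sum_le_sum fun i _ => ?_
          exact natDegree_linear_le
      _ = j := by simp
      _ < n := hj
  have heval : ∀ k : ℕ, P.eval (k : ℝ) = ∏ i ∈ Finset.range j, ((β + k) / r + (i + 1)) := by
    intro k
    rw [hPdef, eval_prod]
    refine Finset.prod_congr rfl fun i _ => ?_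
    simp only [eval_add, eval_mul, eval_C, eval_X]
    field_simp
    ring
  have hterm : ∀ k ∈ Finset.range (n + 1),
      (n.choose k : ℝ) * (-1) ^ (n - k) / Real.Gamma ((β + k) / r + 1)
        * Real.Gamma ((β + k) / r + (j + 1))
      = (-1 : ℝ) ^ (n - k) * (n.choose k : ℝ) * P.eval (k : ℝ) := by
    intro k _
    have hr' : (1:ℝ) ≤ r := by exact_mod_cast hr
    have hc : -1 < (β + k) / r := by
      rw [lt_div_iff₀ hrpos]
      have : (0:ℝ) ≤ k := Nat.cast_nonneg k
      nlinarith
    have hG : Real.Gamma ((β + k) / r + 1) ≠ 0 :=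
      ne_of_gt (Real.Gamma_pos_of_pos (by linarith))
    have key : ∀ (a p G : ℝ), G ≠ 0 → a / G * (G * p) = a * p := by
      intro a p G hG; field_simp
    rw [gamma_ratio _ hc j, key _ _ _ hG, heval k]
    ring
  rw [Finset.sum_congr rfl hterm]
  exact fd_lemma n P (by omega) hdeg


/-- The polynomial `p_n(X; β)` (as a `Polynomial ℝ`) for the Laguerre-Angelesco
polynomials on an `r`-star. -/
noncomputable def laPolynomial (r n : ℕ) (β : ℝ) : Polynomial ℝ :=
  ∑ k ∈ Finset.range (n + 1),
    Polynomial.C ((n.choose k : ℝ) * (-1) ^ (n - k) / Real.Gamma ((β + k) / r + 1)) *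
      Polynomial.X ^ k

section integrals
variable {r : ℕ} (hr : 1 ≤ r) {β : ℝ} (hβ : β > -1)

include hr in
theorem elem_integrable (a : ℝ) (ha : -1 < a) :
    IntegrableOn (fun x : ℝ => x ^ a * Real.exp (-x ^ (r:ℝ))) (Ioi 0) :=
  integrableOn_rpow_mul_exp_neg_rpow ha (by exact_mod_cast hr)

theorem weight_eq (k : ℕ) : ∀ x ∈ Ioi (0:ℝ),
    x ^ k * (x ^ β * Real.exp (-(x ^ r))) = x ^ (β + (k:ℝ)) * Real.exp (-x ^ (r:ℝ)) := by
  intro x hx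
  have hx0 : (0:ℝ) < x := hx
  have h1 : x ^ (β + (k:ℝ)) = x ^ β * x ^ ((k:ℕ):ℝ) := Real.rpow_add hx0 β k
  rw [h1, Real.rpow_natCast x k, ← Real.rpow_natCast x r]
  ring

include hr hβ in
theorem H1a (P : Polynomial ℝ) :
    IntegrableOn (fun x : ℝ => P.eval x * (x ^ β * Real.exp (-(x ^ r)))) (Ioi 0) := by
  have heq : ∀ x ∈ Ioi (0:ℝ), P.eval x * (x ^ β * Real.exp (-(x ^ r)))
      = ∑ k ∈ Finset.range (P.natDegree + 1),
          P.coeff k * (x ^ (β + (k:ℝ)) * Real.exp (-x ^ (r:ℝ))) := by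
    intro x hx
    rw [Polynomial.eval_eq_sum_range, Finset.sum_mul]
    exact Finset.sum_congr rfl fun k _ => by rw [mul_assoc, weight_eq k x hx]
  refine IntegrableOn.congr_fun ?_ (fun x hx => (heq x hx).symm) measurableSet_Ioi
  refine integrable_finset_sum _ fun k _ => ?_
  refine (elem_integrable hr (β + k) ?_).const_mul _
  have : (0:ℝ) ≤ k := Nat.cast_nonneg k
  linarith

include hr hβ in
theorem H1b (c : ℝ) (m : ℕ) :
    ∫ x in Ioi (0:ℝ), (Polynomial.C c * Polynomial.X ^ m).eval x * (x ^ β * Real.exp (-(x ^ r)))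
      = c * ((1/(r:ℝ)) * Real.Gamma ((β + m + 1) / r)) := by
  have hrpos : (0:ℝ) < r := by exact_mod_cast hr
  have heq : ∀ x ∈ Ioi (0:ℝ), (Polynomial.C c * Polynomial.X ^ m).eval x * (x ^ β * Real.exp (-(x ^ r)))
      = c * (x ^ (β + (m:ℝ)) * Real.exp (-x ^ (r:ℝ))) := by
    intro x hx
    rw [Polynomial.eval_mul, Polynomial.eval_C, Polynomial.eval_pow, Polynomial.eval_X,
      mul_assoc, weight_eq m x hx]
  rw [setIntegral_congr_fun measurableSet_Ioi heq, MeasureTheory.integral_const_mul,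
    integral_rpow_mul_exp_neg_rpow hrpos (by nlinarith [Nat.cast_nonneg (α := ℝ) m])]

include hr hβ in
theorem H1c {ι : Type} (s : Finset ι) (g : ι → Polynomial ℝ) :
    ∫ x in Ioi (0:ℝ), (∑ i ∈ s, g i).eval x * (x ^ β * Real.exp (-(x ^ r)))
      = ∑ i ∈ s, ∫ x in Ioi (0:ℝ), (g i).eval x * (x ^ β * Real.exp (-(x ^ r))) := by
  have heq : ∀ x : ℝ, (∑ i ∈ s, g i).eval x * (x ^ β * Real.exp (-(x ^ r)))
      = ∑ i ∈ s, (g i).eval x * (x ^ β * Real.exp (-(x ^ r))) := by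
    intro x; rw [Polynomial.eval_finset_sum, Finset.sum_mul]
  simp_rw [heq]
  exact MeasureTheory.integral_finset_sum s fun i _ => H1a hr hβ (g i)
end integrals
theorem orth_int (r n : ℕ) (hr : 1 ≤ r) (β : ℝ) (hβ : β > -1)
    (horth : ∀ j : ℕ, j < n → ∑ k ∈ Finset.range (n + 1),
      (n.choose k : ℝ) * (-1) ^ (n - k) / Real.Gamma ((β + k) / r + 1)
        * Real.Gamma ((β + k) / r + (j + 1)) = 0)
    (Q : Polynomial ℝ) (hQn : Q.natDegree < n) :
    ∫ x in Ioi (0:ℝ),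
      (laPolynomial r n β * (Polynomial.X ^ (r-1) * Q.comp (Polynomial.X ^ r))).eval x
        * (x ^ β * Real.exp (-(x ^ r))) = 0 := by
  have hrpos : (0:ℝ) < r := by exact_mod_cast hr
  have hr0 : (r:ℝ) ≠ 0 := ne_of_gt hrpos
  set a : ℕ → ℝ := fun k => (n.choose k : ℝ) * (-1) ^ (n - k) / Real.Gamma ((β + k) / r + 1) with ha
  -- decompose Q.comp (X^r)
  have hQdecomp : Q.comp (Polynomial.X ^ r)
      = ∑ i ∈ Finset.range (Q.natDegree + 1), Polynomial.C (Q.coeff i) * Polynomial.X ^ (r * i) := by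
    conv_lhs => rw [Q.as_sum_range_C_mul_X_pow]
    rw [Polynomial.sum_comp]
    refine Finset.sum_congr rfl fun i _ => ?_
    rw [Polynomial.mul_comp, Polynomial.C_comp, Polynomial.pow_comp, Polynomial.X_comp, ← pow_mul]
  -- decompose the full product
  have hdecomp : laPolynomial r n β * (Polynomial.X ^ (r-1) * Q.comp (Polynomial.X ^ r))
      = ∑ k ∈ Finset.range (n + 1), ∑ i ∈ Finset.range (Q.natDegree + 1),
          Polynomial.C (a k * Q.coeff i) * Polynomial.X ^ (k + r * i + (r - 1)) := by
    rw [laPolynomial, hQdecomp, Finset.sum_mul]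
    refine Finset.sum_congr rfl fun k _ => ?_
    rw [Finset.mul_sum, Finset.mul_sum]
    refine Finset.sum_congr rfl fun i _ => ?_
    rw [Polynomial.C_mul, pow_add, pow_add]
    ring
  rw [hdecomp, H1c hr hβ]
  have hinner : ∀ k ∈ Finset.range (n+1),
      (∫ x in Ioi (0:ℝ), (∑ i ∈ Finset.range (Q.natDegree + 1),
          Polynomial.C (a k * Q.coeff i) * Polynomial.X ^ (k + r * i + (r - 1))).eval x
        * (x ^ β * Real.exp (-(x ^ r))))
      = ∑ i ∈ Finset.range (Q.natDegree + 1),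
          (a k * Q.coeff i) * ((1/(r:ℝ)) * Real.Gamma ((β + (k + r * i + (r-1) : ℕ) + 1) / r)) := by
    intro k _
    rw [H1c hr hβ]
    exact Finset.sum_congr rfl fun i _ => H1b hr hβ _ _
  rw [Finset.sum_congr rfl hinner, Finset.sum_comm]
  have hexp : ∀ k i : ℕ, (β + (k + r * i + (r-1) : ℕ) + 1) / r = (β + k) / r + ((i:ℝ) + 1) := by
    intro k i
    have : ((k + r * i + (r-1) : ℕ) : ℝ) = (k:ℝ) + r * i + ((r:ℝ) - 1) := by
      push_cast [Nat.cast_sub hr]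
      ring
    rw [this]
    field_simp
    ring
  have houter : ∀ i ∈ Finset.range (Q.natDegree + 1),
      (∑ k ∈ Finset.range (n+1),
        (a k * Q.coeff i) * ((1/(r:ℝ)) * Real.Gamma ((β + (k + r * i + (r-1) : ℕ) + 1) / r)))
      = (Q.coeff i * (1/(r:ℝ))) * ∑ k ∈ Finset.range (n+1),
          a k * Real.Gamma ((β + k) / r + ((i:ℝ) + 1)) := by
    intro i _
    rw [Finset.mul_sum]
    refine Finset.sum_congr rfl fun k _ => ?_
    rw [hexp k i]
    ring
  rw [Finset.sum_congr rfl houter]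
  refine Finset.sum_eq_zero fun i hi => ?_
  have hin : i < n := by
    have := Finset.mem_range.mp hi; omega
  rw [horth i hin, mul_zero]

theorem sign_lemma (N : ℕ) : ∀ g : Polynomial ℝ, g.natDegree ≤ N →
    (∀ z : ℝ, 0 < z → Even (Polynomial.rootMultiplicity z g)) →
    ∀ x y : ℝ, 0 < x → 0 < y → 0 ≤ g.eval x * g.eval y := by
  induction N with
  | zero =>
    intro g hdeg _ x y hx hy
    obtain ⟨c, rfl⟩ := Polynomial.natDegree_eq_zero.mp (Nat.le_zero.mp hdeg)
    simp only [Polynomial.eval_C]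
    exact mul_self_nonneg c
  | succ N ih =>
    intro g hdeg hyp x y hx hy
    rcases eq_or_ne g 0 with rfl | hg0
    · simp
    by_cases hroot : ∃ ρ : ℝ, 0 < ρ ∧ g.IsRoot ρ
    · obtain ⟨ρ, hρ, hgρ⟩ := hroot
      set d := Polynomial.rootMultiplicity ρ g with hd
      have hdpos : 0 < d := (Polynomial.rootMultiplicity_pos hg0).mpr hgρ
      have hdeven : Even d := hyp ρ hρ
      have hd2 : 2 ≤ d := Nat.le_of_dvd hdpos hdeven.two_dvd
      set g₁ := g /ₘ (Polynomial.X - Polynomial.C ρ) ^ d with hg₁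
      have hfact : (Polynomial.X - Polynomial.C ρ) ^ d * g₁ = g :=
        Polynomial.pow_mul_divByMonic_rootMultiplicity_eq g ρ
      have hg₁0 : g₁ ≠ 0 := by
        intro h; rw [h, mul_zero] at hfact; exact hg0 hfact.symm
      have hdeg₁ : g₁.natDegree ≤ N := by
        have := Polynomial.natDegree_mul (pow_ne_zero d (Polynomial.X_sub_C_ne_zero ρ)) hg₁0
        rw [hfact] at this
        rw [Polynomial.natDegree_pow, Polynomial.natDegree_X_sub_C, mul_one] at this
        omega
      have hyp₁ : ∀ z : ℝ, 0 < z → Even (Polynomial.rootMultiplicity z g₁) := by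
        intro z hz
        have hmul : Polynomial.rootMultiplicity z g
            = Polynomial.rootMultiplicity z ((Polynomial.X - Polynomial.C ρ) ^ d)
              + Polynomial.rootMultiplicity z g₁ := by
          rw [← Polynomial.rootMultiplicity_mul (by rw [hfact]; exact hg0), hfact]
        rcases eq_or_ne z ρ with rfl | hne
        · rw [Polynomial.rootMultiplicity_X_sub_C_pow, ← hd] at hmul
          have h0 : Polynomial.rootMultiplicity z g₁ = 0 := by omega
          rw [h0]; exact Even.zero
        · have : Polynomial.rootMultiplicity z ((Polynomial.X - Polynomial.C ρ) ^ d) = 0 := by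
            refine Polynomial.rootMultiplicity_eq_zero ?_
            simp only [Polynomial.IsRoot, Polynomial.eval_pow, Polynomial.eval_sub,
              Polynomial.eval_X, Polynomial.eval_C]
            exact pow_ne_zero d (sub_ne_zero.mpr hne)
          rw [this, zero_add] at hmul
          rw [← hmul]; exact hyp z hz
      have key := ih g₁ hdeg₁ hyp₁ x y hx hy
      have hevalx : g.eval x = (x - ρ) ^ d * g₁.eval x := by
        rw [← hfact]; simp
      have hevaly : g.eval y = (y - ρ) ^ d * g₁.eval y := by
        rw [← hfact]; simp
      rw [hevalx, hevaly]
      have h1 : 0 ≤ (x - ρ) ^ d := hdeven.pow_nonneg _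
      have h2 : 0 ≤ (y - ρ) ^ d := hdeven.pow_nonneg _
      calc (0:ℝ) ≤ ((x - ρ) ^ d * (y - ρ) ^ d) * (g₁.eval x * g₁.eval y) :=
            mul_nonneg (mul_nonneg h1 h2) key
        _ = (x - ρ) ^ d * g₁.eval x * ((y - ρ) ^ d * g₁.eval y) := by ring
    · -- no positive root: g has constant sign on Ioi 0, by IVT
      push_neg at hroot
      by_contra hcon
      push_neg at hcon
      have : (0:ℝ) ∈ Set.uIcc (g.eval x) (g.eval y) := by
        rcases lt_or_ge (g.eval x) 0 with h1 | h1
        · have h2 : 0 < g.eval y := by nlinarith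
          exact Set.mem_uIcc.mpr (Or.inl ⟨le_of_lt h1, le_of_lt h2⟩)
        · have h1' : 0 < g.eval x := lt_of_le_of_ne h1 (by
            intro h; rw [← h] at hcon; simp at hcon)
          have h2 : g.eval y < 0 := by nlinarith
          exact Set.mem_uIcc.mpr (Or.inr ⟨le_of_lt h2, h1'.le⟩)
      have hcont : ContinuousOn (fun t => g.eval t) (Set.uIcc x y) :=
        (Polynomial.continuous g).continuousOn
      obtain ⟨z, hz, hz0⟩ := intermediate_value_uIcc hcont this
      have hzpos : 0 < z := lt_of_lt_of_le (lt_min hx hy) (Set.mem_uIcc.mp hz |>.elim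
        (fun h => le_trans (min_le_left x y) h.1 |> fun _ => h.1.trans' (min_le_left x y))
        (fun h => h.1.trans' (min_le_right x y)))
      exact hroot z hzpos hz0

theorem pos_integral_aux (f : ℝ → ℝ) (hInt : IntegrableOn f (Ioi 0))
    (hnn : ∀ x ∈ Set.Ioi (0:ℝ), 0 ≤ f x) (x₀ : ℝ) (hx₀ : x₀ ∈ Set.Ioi (0:ℝ)) (hfx₀ : f x₀ ≠ 0)
    (hcont : ContinuousOn f (Set.Ioi 0)) : 0 < ∫ x in Set.Ioi (0:ℝ), f x := by
  rw [setIntegral_pos_iff_support_of_nonneg_ae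
    ((ae_restrict_iff' measurableSet_Ioi).mpr (Filter.Eventually.of_forall hnn)) hInt]
  have hV : IsOpen (Set.Ioi (0:ℝ) ∩ f ⁻¹' ({0}ᶜ)) :=
    hcont.isOpen_inter_preimage isOpen_Ioi (isOpen_compl_singleton)
  have hVsub : Set.Ioi (0:ℝ) ∩ f ⁻¹' ({0}ᶜ) ⊆ Function.support f ∩ Set.Ioi 0 := by
    rintro z ⟨hz1, hz2⟩
    exact ⟨hz2, hz1⟩
  refine lt_of_lt_of_le (hV.measure_pos volume ⟨x₀, hx₀, hfx₀⟩) (measure_mono hVsub)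


-- basic facts about laPolynomial
theorem la_coeff (r n : ℕ) (β : ℝ) (m : ℕ) (hm : m ≤ n) :
    (laPolynomial r n β).coeff m
      = (n.choose m : ℝ) * (-1) ^ (n - m) / Real.Gamma ((β + m) / r + 1) := by
  rw [laPolynomial, Polynomial.finset_sum_coeff]
  rw [Finset.sum_eq_single m]
  · rw [Polynomial.coeff_C_mul, Polynomial.coeff_X_pow, if_pos rfl, mul_one]
  · intro k _ hk
    rw [Polynomial.coeff_C_mul, Polynomial.coeff_X_pow, if_neg (Ne.symm hk), mul_zero]
  · intro h
    exact absurd (Finset.mem_range.mpr (by omega)) h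

theorem la_natDegree (r n : ℕ) (hr : 1 ≤ r) (β : ℝ) (hβ : β > -1) :
    (laPolynomial r n β).natDegree = n ∧ laPolynomial r n β ≠ 0 := by
  have hrpos : (0:ℝ) < r := by exact_mod_cast hr
  have hG : (0:ℝ) < Real.Gamma ((β + n) / r + 1) := by
    refine Real.Gamma_pos_of_pos ?_
    have h1 : -1 < (β + n) / r := by
      rw [lt_div_iff₀ hrpos]
      have h2 : (0:ℝ) ≤ n := Nat.cast_nonneg n
      have hr' : (1:ℝ) ≤ r := by exact_mod_cast hr
      nlinarith
    linarith
  have hcoeff : (laPolynomial r n β).coeff n ≠ 0 := by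
    rw [la_coeff r n β n le_rfl, Nat.choose_self, Nat.sub_self]
    simp only [pow_zero, Nat.cast_one, one_mul, mul_one]
    exact one_div_ne_zero (ne_of_gt hG)
  have hne : laPolynomial r n β ≠ 0 := fun h => by simp [h] at hcoeff
  have hle : (laPolynomial r n β).natDegree ≤ n := by
    refine Polynomial.natDegree_sum_le_of_forall_le _ _ fun k hk => ?_
    refine le_trans (Polynomial.natDegree_C_mul_le _ _) ?_
    rw [Polynomial.natDegree_X_pow]
    exact Nat.lt_succ_iff.mp (Finset.mem_range.mp hk)
  exact ⟨le_antisymm hle (Polynomial.le_natDegree_of_ne_zero hcoeff), hne⟩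
theorem la_card_S (r n : ℕ) (hr : 1 ≤ r) (β : ℝ) (hβ : β > -1) :
    n ≤ (((laPolynomial r n β).roots.toFinset).filter
      (fun ρ => 0 < ρ ∧ Odd (Polynomial.rootMultiplicity ρ (laPolynomial r n β)))).card := by
  classical
  set p := laPolynomial r n β with hp
  obtain ⟨hdeg, hp0⟩ := la_natDegree r n hr β hβ
  set S := (p.roots.toFinset).filter
      (fun ρ => 0 < ρ ∧ Odd (Polynomial.rootMultiplicity ρ p)) with hSdef
  by_contra hS
  push_neg at hS
  have hSpos : ∀ ρ ∈ S, 0 < ρ := fun ρ hρ => ((Finset.mem_filter.mp hρ).2).1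
  set Q : Polynomial ℝ := ∏ ρ ∈ S, (Polynomial.X - Polynomial.C (ρ ^ r)) with hQdef
  have hQdeg : Q.natDegree = S.card := by
    rw [hQdef, Polynomial.natDegree_prod _ _ (fun ρ _ => Polynomial.X_sub_C_ne_zero _),
      Finset.sum_congr rfl (fun ρ _ => Polynomial.natDegree_X_sub_C (ρ ^ r)),
      Finset.sum_const, smul_eq_mul, mul_one]
  set q' : Polynomial ℝ := Polynomial.X ^ (r-1) * Q.comp (Polynomial.X ^ r) with hq'def
  set f : ℝ → ℝ := fun x => (p * q').eval x * (x ^ β * Real.exp (-(x ^ r))) with hfdef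
  have hint0 : ∫ x in Set.Ioi (0:ℝ), f x = 0 :=
    orth_int r n hr β hβ (fun j hj => orth_sum r n hr β hβ j hj) Q (by omega)
  have hInt : IntegrableOn f (Set.Ioi 0) := H1a hr hβ (p * q')
  -- the auxiliary polynomial g with all even multiplicities on (0,∞)
  set g : Polynomial ℝ := p * ∏ ρ ∈ S, (Polynomial.X - Polynomial.C ρ) with hgdef
  have hprodne : (∏ ρ ∈ S, (Polynomial.X - Polynomial.C ρ)) ≠ 0 :=
    Finset.prod_ne_zero_iff.mpr fun ρ _ => Polynomial.X_sub_C_ne_zero ρ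
  have hg0 : g ≠ 0 := mul_ne_zero hp0 hprodne
  have hRMprod : ∀ z : ℝ, Polynomial.rootMultiplicity z (∏ ρ ∈ S, (Polynomial.X - Polynomial.C ρ))
      = if z ∈ S then 1 else 0 := by
    intro z
    rw [← Polynomial.count_roots]
    have hprodeq : (∏ ρ ∈ S, (Polynomial.X - Polynomial.C ρ))
        = (S.val.map fun a => Polynomial.X - Polynomial.C a).prod := rfl
    rw [hprodeq, Polynomial.roots_multiset_prod_X_sub_C]
    by_cases hz : z ∈ S
    · rw [if_pos hz]
      exact Multiset.count_eq_one_of_mem S.nodup hz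
    · rw [if_neg hz]
      exact Multiset.count_eq_zero_of_notMem hz
  have heven : ∀ z : ℝ, 0 < z → Even (Polynomial.rootMultiplicity z g) := by
    intro z hz
    rw [hgdef, Polynomial.rootMultiplicity_mul (by rw [← hgdef]; exact hg0), hRMprod z]
    by_cases hzS : z ∈ S
    · rw [if_pos hzS]
      exact (((Finset.mem_filter.mp hzS).2).2).add_one
    · rw [if_neg hzS, add_zero]
      by_cases hzr : p.IsRoot z
      · have hzmem : z ∈ p.roots.toFinset :=
          Multiset.mem_toFinset.mpr ((Polynomial.mem_roots hp0).mpr hzr)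
        have : ¬ Odd (Polynomial.rootMultiplicity z p) := by
          intro hodd
          exact hzS (Finset.mem_filter.mpr ⟨hzmem, hz, hodd⟩)
        exact Nat.not_odd_iff_even.mp this
      · rw [Polynomial.rootMultiplicity_eq_zero hzr]
        exact Even.zero
  have hsign := sign_lemma g.natDegree g le_rfl heven
  -- pointwise factorization of f
  have hfact : ∀ x : ℝ, 0 < x → ∃ B : ℝ, 0 < B ∧ f x = g.eval x * B := by
    intro x hx
    refine ⟨(x ^ (r-1) * ∏ ρ ∈ S, (∑ i ∈ Finset.range r, x ^ i * ρ ^ (r-1-i)))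
      * (x ^ β * Real.exp (-(x ^ r))), ?_, ?_⟩
    · have h1 : (0:ℝ) < x ^ (r-1) := pow_pos hx _
      have h2 : (0:ℝ) < ∏ ρ ∈ S, (∑ i ∈ Finset.range r, x ^ i * ρ ^ (r-1-i)) := by
        refine Finset.prod_pos fun ρ hρ => ?_
        refine Finset.sum_pos (fun i _ => mul_pos (pow_pos hx _) (pow_pos (hSpos ρ hρ) _)) ?_
        rw [Finset.nonempty_range_iff]; omega
      have h3 : (0:ℝ) < x ^ β := Real.rpow_pos_of_pos hx β
      have h4 : (0:ℝ) < Real.exp (-(x ^ r)) := Real.exp_pos _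
      positivity
    · rw [hfdef]
      simp only
      have hq'eval : q'.eval x = x ^ (r-1) * ∏ ρ ∈ S, (x ^ r - ρ ^ r) := by
        rw [hq'def, Polynomial.eval_mul, Polynomial.eval_pow, Polynomial.eval_X,
          Polynomial.eval_comp, Polynomial.eval_pow, Polynomial.eval_X, hQdef,
          Polynomial.eval_prod]
        exact congrArg _ (Finset.prod_congr rfl fun ρ _ => by simp)
      have hgeom : ∀ ρ ∈ S, x ^ r - ρ ^ r
          = (∑ i ∈ Finset.range r, x ^ i * ρ ^ (r-1-i)) * (x - ρ) :=
        fun ρ _ => (geom_sum₂_mul x ρ r).symm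
      have hgeval : g.eval x = p.eval x * ∏ ρ ∈ S, (x - ρ) := by
        rw [hgdef]
        simp [Polynomial.eval_prod]
      rw [Polynomial.eval_mul, hq'eval, Finset.prod_congr rfl hgeom,
        Finset.prod_mul_distrib, hgeval]
      ring
  have hff : ∀ x y : ℝ, 0 < x → 0 < y → 0 ≤ f x * f y := by
    intro x y hx hy
    obtain ⟨Bx, hBx, hfx⟩ := hfact x hx
    obtain ⟨By, hBy, hfy⟩ := hfact y hy
    rw [hfx, hfy]
    calc (0:ℝ) ≤ (g.eval x * g.eval y) * (Bx * By) :=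
          mul_nonneg (hsign x y hx hy) (mul_nonneg hBx.le hBy.le)
      _ = g.eval x * Bx * (g.eval y * By) := by ring
  -- q' and p*q' nonzero
  have hQmonic : Q.Monic := Polynomial.monic_prod_of_monic _ _ fun ρ _ => Polynomial.monic_X_sub_C _
  have hq'0 : q' ≠ 0 := by
    refine mul_ne_zero (pow_ne_zero _ Polynomial.X_ne_zero) ?_
    exact (hQmonic.comp (Polynomial.monic_X_pow r)
      (by rw [Polynomial.natDegree_X_pow]; omega)).ne_zero
  have hpq'0 : p * q' ≠ 0 := mul_ne_zero hp0 hq'0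
  -- pick a positive non-root point
  have hroots_fin : {x : ℝ | (p * q').IsRoot x}.Finite := Polynomial.finite_setOf_isRoot hpq'0
  obtain ⟨x₀, hx₀⟩ := ((Set.Ioi_infinite (0:ℝ)).diff hroots_fin).nonempty
  have hx₀pos : (0:ℝ) < x₀ := hx₀.1
  have hfx₀ : f x₀ ≠ 0 := by
    rw [hfdef]
    simp only
    refine mul_ne_zero hx₀.2 ?_
    exact ne_of_gt (mul_pos (Real.rpow_pos_of_pos hx₀pos β) (Real.exp_pos _))
  -- continuity of f on Ioi 0
  have hcont : ContinuousOn f (Set.Ioi 0) := by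
    rw [hfdef]
    refine ContinuousOn.mul ((p * q').continuous.continuousOn) (ContinuousOn.mul ?_ ?_)
    · exact fun x hx => (Real.continuousAt_rpow_const x β (Or.inl (ne_of_gt hx))).continuousWithinAt
    · exact (Real.continuous_exp.comp (continuous_pow r).neg).continuousOn
  -- conclude contradiction
  rcases lt_or_gt_of_ne hfx₀ with hneg | hpos
  · have hnn : ∀ x ∈ Set.Ioi (0:ℝ), 0 ≤ -f x := by
      intro x hx
      have := hff x x₀ hx hx₀pos
      nlinarith
    have := pos_integral_aux (fun x => -f x) hInt.neg hnn x₀ hx₀pos (by simpa using hfx₀)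
      hcont.neg
    rw [MeasureTheory.integral_neg, hint0, neg_zero] at this
    exact lt_irrefl 0 this
  · have hnn : ∀ x ∈ Set.Ioi (0:ℝ), 0 ≤ f x := by
      intro x hx
      have := hff x x₀ hx hx₀pos
      nlinarith
    have := pos_integral_aux f hInt hnn x₀ hx₀pos hfx₀ hcont
    rw [hint0] at this
    exact lt_irrefl 0 this
theorem stmt_8 (r n : ℕ) (hr : 1 ≤ r) (β : ℝ) (hβ : β > -1) (x : ℝ)
    (hx : (laPolynomial r n β).IsRoot x) :
    x ∈ Set.Ioi (0 : ℝ) ∧ (laPolynomial r n β).rootMultiplicity x = 1 := by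
  classical
  obtain ⟨hdeg, hp0⟩ := la_natDegree r n hr β hβ
  have hcard := la_card_S r n hr β hβ
  set p := laPolynomial r n β with hp
  set S := ((p.roots.toFinset).filter
      (fun ρ => 0 < ρ ∧ Odd (Polynomial.rootMultiplicity ρ p))) with hSdef
  have h1 : S.card ≤ p.roots.toFinset.card := Finset.card_filter_le _ _
  have h2 : p.roots.toFinset.card ≤ Multiset.card p.roots := Multiset.toFinset_card_le _
  have h3 : Multiset.card p.roots ≤ n := by
    have := p.card_roots'
    omega
  have hxr : x ∈ p.roots := Polynomial.mem_roots'.mpr ⟨hp0, hx⟩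
  have hxF : x ∈ p.roots.toFinset := Multiset.mem_toFinset.mpr hxr
  have hSeq : S = p.roots.toFinset :=
    Finset.eq_of_subset_of_card_le (Finset.filter_subset _ _) (by omega)
  have hScard : n ≤ p.roots.toFinset.card := by rw [← hSeq]; exact hcard
  constructor
  · have hxS : x ∈ S := by rw [hSeq]; exact hxF
    exact ((Finset.mem_filter.mp hxS).2).1
  · have hsum : ∑ a ∈ p.roots.toFinset, p.roots.count a = Multiset.card p.roots :=
      Multiset.toFinset_sum_count_eq _
    have hone : 1 ≤ p.roots.count x := Multiset.one_le_count_iff_mem.mpr hxr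
    have hcount : p.roots.count x = 1 := by
      by_contra hc
      have h2' : 2 ≤ p.roots.count x := by omega
      have hsplit : p.roots.count x + ∑ a ∈ p.roots.toFinset.erase x, p.roots.count a
          = ∑ a ∈ p.roots.toFinset, p.roots.count a :=
        Finset.add_sum_erase _ (fun a => p.roots.count a) hxF
      have hge : (p.roots.toFinset.erase x).card
          ≤ ∑ a ∈ p.roots.toFinset.erase x, p.roots.count a := by
        rw [Finset.card_eq_sum_ones]
        refine Finset.sum_le_sum fun a ha => ?_
        exact Multiset.one_le_count_iff_mem.mpr
          (Multiset.mem_toFinset.mp (Finset.mem_of_mem_erase ha))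
      have hec : (p.roots.toFinset.erase x).card = p.roots.toFinset.card - 1 :=
        Finset.card_erase_of_mem hxF
      omega
    rw [← Polynomial.count_roots]
    exact hcount
end

section
/- Let $r \ge 1$, $\beta > 0$, and $p_n(x;\beta)$ as defined. Then the raising relation holds: $\frac{d}{dx}\left[x^\beta e^{-x^r} p_n(x;\beta)\right] = x^{\beta-1} e^{-x^r} \sum_{k=1}^r (-1)^k \binom{r}{k}\, r\, x^{r-k}\, p_{n+k}(x;\beta-k)$ for all $x > 0$. -/
lemma neg_one_pow_sub {n k : ℕ} (h : k ≤ n) : ((-1:ℝ))^(n-k) = (-1)^n * (-1)^k := by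
  obtain ⟨d, rfl⟩ := Nat.exists_eq_add_of_le h
  rw [Nat.add_sub_cancel_left, pow_add]
  ring_nf
  rw [pow_mul]
  norm_num
  exact neg_one_pow_eq_or ℝ k

lemma laPoly_eq (r n : ℕ) (β x : ℝ) :
    laPoly r n β x = (-1:ℝ)^n * ∑ k ∈ Finset.range (n+1),
      (n.choose k : ℝ) * (-1)^k / Real.Gamma ((β + k)/r + 1) * x ^ k := by
  rw [laPoly, Finset.mul_sum]
  refine Finset.sum_congr rfl fun k hk => ?_
  rw [Finset.mem_range] at hk
  rw [neg_one_pow_sub (Nat.lt_succ_iff.mp hk)]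
  ring

lemma sum_choose_succ (n : ℕ) (g : ℕ → ℝ) :
    ∑ j ∈ Finset.range (n+2), ((n+1).choose j : ℝ) * g j
      = (∑ j ∈ Finset.range (n+1), (n.choose j : ℝ) * g (j+1))
        + ∑ j ∈ Finset.range (n+1), (n.choose j : ℝ) * g j := by
  rw [Finset.sum_range_succ' (fun j => ((n+1).choose j : ℝ) * g j)]
  simp only [Nat.choose_succ_succ, Nat.cast_add, add_mul, Nat.choose_zero_right, Nat.cast_one]
  rw [Finset.sum_add_distrib]
  have h2 : ∑ j ∈ Finset.range (n+1), (n.choose (j+1) : ℝ) * g (j+1)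
      = ∑ j ∈ Finset.range n, (n.choose (j+1) : ℝ) * g (j+1) := by
    rw [Finset.sum_range_succ, Nat.choose_succ_self]
    simp
  rw [h2, Finset.sum_range_succ' (fun j => (n.choose j : ℝ) * g j)]
  simp
  ring

lemma laPoly_rec (r n : ℕ) (β x : ℝ) :
    laPoly r (n+1) (β-1) x = x * laPoly r n β x - laPoly r n (β-1) x := by
  rw [laPoly_eq, laPoly_eq r n β, laPoly_eq r n (β-1)]
  have h1 : ∑ k ∈ Finset.range (n+1+1),
      ((n+1).choose k : ℝ) * (-1)^k / Real.Gamma ((β - 1 + k)/r + 1) * x ^ k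
      = ∑ j ∈ Finset.range (n+2), ((n+1).choose j : ℝ)
          * ((-1)^j / Real.Gamma ((β - 1 + j)/r + 1) * x ^ j) := by
    refine Finset.sum_congr rfl fun k _ => by ring
  rw [h1, sum_choose_succ n (fun j => (-1)^j / Real.Gamma ((β - 1 + j)/r + 1) * x ^ j)]
  have h2 : ∑ j ∈ Finset.range (n+1), (n.choose j : ℝ)
        * ((-1:ℝ)^(j+1) / Real.Gamma ((β - 1 + (j+1:ℕ))/r + 1) * x ^ (j+1))
      = -x * ∑ k ∈ Finset.range (n+1),
        (n.choose k : ℝ) * (-1)^k / Real.Gamma ((β + k)/r + 1) * x ^ k := by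
    rw [neg_mul, ← neg_eq_iff_eq_neg, ← Finset.sum_neg_distrib, Finset.mul_sum]
    refine Finset.sum_congr rfl fun j _ => ?_
    have : (β - 1 + ((j:ℝ)+1)) = β + j := by ring
    push_cast
    rw [this]
    ring
  have h3 : ∑ j ∈ Finset.range (n+1), (n.choose j : ℝ)
        * ((-1:ℝ)^j / Real.Gamma ((β - 1 + j)/r + 1) * x ^ j)
      = ∑ k ∈ Finset.range (n+1),
        (n.choose k : ℝ) * (-1)^k / Real.Gamma ((β - 1 + k)/r + 1) * x ^ k := by
    refine Finset.sum_congr rfl fun k _ => by ring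
  push_cast at h2 ⊢
  rw [h2, h3]
  ring

lemma laPoly_sum (r0 : ℕ) (x : ℝ) : ∀ (s : ℕ), ∀ (n : ℕ) (β : ℝ),
    ∑ k ∈ Finset.range (s+1), (-1:ℝ)^k * (s.choose k : ℝ) * x^(s-k) * laPoly r0 (n+k) (β - k) x
      = laPoly r0 n (β - s) x := by
  intro s
  induction s with
  | zero => intro n β; simp
  | succ s IH =>
    intro n β
    have h1 : ∑ k ∈ Finset.range (s+2),
        (-1:ℝ)^k * ((s+1).choose k : ℝ) * x^(s+1-k) * laPoly r0 (n+k) (β - k) x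
        = ∑ j ∈ Finset.range (s+2), ((s+1).choose j : ℝ)
            * ((-1:ℝ)^j * x^(s+1-j) * laPoly r0 (n+j) (β - j) x) := by
      refine Finset.sum_congr rfl fun k _ => by ring
    rw [h1, sum_choose_succ s (fun j => (-1:ℝ)^j * x^(s+1-j) * laPoly r0 (n+j) (β - j) x)]
    have h2 : ∑ j ∈ Finset.range (s+1), (s.choose j : ℝ)
          * ((-1:ℝ)^(j+1) * x^(s+1-(j+1)) * laPoly r0 (n+(j+1)) (β - ((j:ℕ)+1:ℕ)) x)
        = -laPoly r0 (n+1) ((β - 1) - s) x := by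
      rw [← IH (n+1) (β-1), ← Finset.sum_neg_distrib]
      refine Finset.sum_congr rfl fun j _ => ?_
      have e1 : n + (j+1) = n + 1 + j := by ring
      have e2 : β - ((j:ℝ)+1) = β - 1 - j := by ring
      have e3 : s + 1 - (j+1) = s - j := by omega
      push_cast
      rw [e1, e2]
      ring
    have h3 : ∑ j ∈ Finset.range (s+1), (s.choose j : ℝ)
          * ((-1:ℝ)^j * x^(s+1-j) * laPoly r0 (n+j) (β - j) x)
        = x * laPoly r0 n (β - s) x := by
      rw [← IH n β, Finset.mul_sum]
      refine Finset.sum_congr rfl fun j hj => ?_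
      rw [Finset.mem_range] at hj
      have e3 : s + 1 - j = (s - j) + 1 := by omega
      rw [e3, pow_succ]
      ring
    push_cast at h2 h3 ⊢
    rw [h2, h3]
    have e4 : β - ((s:ℝ)+1) = (β - s) - 1 := by ring
    have e5 : β - 1 - (s:ℝ) = (β - s) - 1 := by ring
    rw [e4, e5, laPoly_rec]
    ring

lemma laPoly_hasDeriv (r n : ℕ) (β x : ℝ) :
    HasDerivAt (fun t => laPoly r n β t)
      (∑ k ∈ Finset.range (n+1),
        (n.choose k : ℝ) * (-1)^(n-k) / Real.Gamma ((β + k)/r + 1) * ((k:ℝ) * x^(k-1))) x := by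
  simp only [laPoly]
  exact HasDerivAt.fun_sum fun k _ => (hasDerivAt_pow k x).const_mul _

lemma laPoly_deriv_id (r n : ℕ) (hr : 1 ≤ r) (β : ℝ) (hβ : 0 < β) (x : ℝ) :
    β * laPoly r n β x + x * deriv (fun t => laPoly r n β t) x
      = r * laPoly r n (β - r) x := by
  rw [(laPoly_hasDeriv r n β x).deriv, laPoly, laPoly, Finset.mul_sum, Finset.mul_sum,
    Finset.mul_sum, ← Finset.sum_add_distrib]
  refine Finset.sum_congr rfl fun k _ => ?_
  have hr' : (r:ℝ) ≠ 0 := by positivity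
  have hbk : (0:ℝ) < β + k := by positivity
  have hz : (0:ℝ) < (β + k)/r := by positivity
  have hG : 0 < Real.Gamma ((β + k)/r) := Real.Gamma_pos_of_pos hz
  have harg : (β - (r:ℝ) + k)/r + 1 = (β + k)/r := by field_simp; ring
  rw [harg, Real.Gamma_add_one hz.ne']
  have hx2 : x * ((k:ℝ) * x^(k-1)) = (k:ℝ) * x^k := by
    cases k with
    | zero => simp
    | succ j => rw [Nat.add_sub_cancel, pow_succ]; push_cast; ring
  have key : (β + (k:ℝ)) * Real.Gamma ((β + k)/r) = (r:ℝ) * ((β + k)/r * Real.Gamma ((β + k)/r)) := by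
    field_simp
  set A : ℝ := (n.choose k : ℝ) * (-1)^(n-k) with hA
  set G : ℝ := Real.Gamma ((β + k)/r) with hG'
  have hzG : (β + (k:ℝ))/r * G ≠ 0 := by positivity
  field_simp
  linear_combination ((n.choose k : ℝ) * (-1:ℝ)^(n-k)) * hx2

theorem stmt_10 (r n : ℕ) (hr : 1 ≤ r) (β : ℝ) (hβ : β > 0) (x : ℝ) (hx : 0 < x) :
    deriv (fun t : ℝ => t ^ β * Real.exp (-(t ^ r)) * laPoly r n β t) x
      = x ^ (β - 1) * Real.exp (-(x ^ r)) *
        ∑ k ∈ Finset.Icc 1 r,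
          (-1 : ℝ) ^ k * (r.choose k) * r * x ^ (r - k) * laPoly r (n + k) (β - k) x := by
  -- the sum over Icc 1 r
  have hins : Finset.range (r+1) = insert 0 (Finset.Icc 1 r) := by
    ext a; simp [Finset.mem_range, Finset.mem_Icc]; omega
  have hfull := laPoly_sum r x r n β
  rw [hins, Finset.sum_insert (by simp)] at hfull
  simp only [pow_zero, Nat.choose_zero_right, Nat.cast_zero, Nat.cast_one, sub_zero,
    Nat.sub_zero, add_zero, one_mul, mul_one] at hfull
  have hS : ∑ k ∈ Finset.Icc 1 r,
      (-1 : ℝ) ^ k * (r.choose k : ℝ) * r * x ^ (r - k) * laPoly r (n + k) (β - k) x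
      = (r:ℝ) * (laPoly r n (β - r) x - x ^ r * laPoly r n β x) := by
    have : ∑ k ∈ Finset.Icc 1 r,
        (-1 : ℝ) ^ k * (r.choose k : ℝ) * r * x ^ (r - k) * laPoly r (n + k) (β - k) x
        = (r:ℝ) * ∑ k ∈ Finset.Icc 1 r,
            (-1 : ℝ) ^ k * (r.choose k : ℝ) * x ^ (r - k) * laPoly r (n + k) (β - k) x := by
      rw [Finset.mul_sum]; exact Finset.sum_congr rfl fun k _ => by ring
    rw [this]
    have h2 : ∑ k ∈ Finset.Icc 1 r,
        (-1 : ℝ) ^ k * (r.choose k : ℝ) * x ^ (r - k) * laPoly r (n + k) (β - k) x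
        = laPoly r n (β - r) x - x ^ r * laPoly r n β x := by
      linarith [hfull]
    rw [h2]
  rw [hS]
  -- derivatives
  set D : ℝ := ∑ k ∈ Finset.range (n+1),
      (n.choose k : ℝ) * (-1)^(n-k) / Real.Gamma ((β + k)/r + 1) * ((k:ℝ) * x^(k-1)) with hD
  have hP : HasDerivAt (fun t => laPoly r n β t) D x := laPoly_hasDeriv r n β x
  have h1 : HasDerivAt (fun t : ℝ => t ^ β) (β * x ^ (β - 1)) x :=
    Real.hasDerivAt_rpow_const (Or.inl hx.ne')
  have h2 : HasDerivAt (fun t : ℝ => Real.exp (-(t ^ r)))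
      (Real.exp (-(x ^ r)) * (-((r:ℝ) * x ^ (r-1)))) x := (hasDerivAt_pow r x).neg.exp
  have htot : HasDerivAt (fun t : ℝ => t ^ β * Real.exp (-(t ^ r)) * laPoly r n β t)
      ((β * x ^ (β - 1) * Real.exp (-(x ^ r))
          + x ^ β * (Real.exp (-(x ^ r)) * (-((r:ℝ) * x ^ (r-1))))) * laPoly r n β x
        + x ^ β * Real.exp (-(x ^ r)) * D) x := (h1.mul h2).mul hP
  rw [htot.deriv]
  have hkey := laPoly_deriv_id r n hr β hβ x
  rw [hP.deriv] at hkey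
  have hxb : x ^ β = x ^ (β - 1) * x := by
    rw [← Real.rpow_add_one hx.ne' (β - 1)]; ring_nf
  have hpow : x ^ (r-1) * x = x ^ r := by
    rw [← pow_succ, Nat.sub_add_cancel hr]
  rw [hxb]
  linear_combination (x ^ (β - 1) * Real.exp (-(x ^ r))) * hkey
    + (Real.exp (-(x ^ r)) * (-((r:ℝ)) * laPoly r n β x) * x ^ (β-1)) * hpow
end

section
/- Let $r \ge 1$, $\beta > -1$, $\omega = e^{2\pi i/r}$, and for the diagonal multi-index $\vec{n} = (n+1,\dots,n+1)$ define $A_{\vec{n},j}(x;\beta) = \frac{r^n}{n!} p_n(\omega^{-j+1} x;\beta)$ for $1 \le j \le r$, with $p_n(x;\beta) = \sum_{k=0}^n \binom{n}{k} \frac{(-1)^{n-k}}{\Gamma(\frac{\beta+k}{r}+1)} x^k$. Then for every integer $k$ with $0 \le k \le r(n+1)-2$, $\sum_{j=1}^r \int_0^{\omega^{j-1}\infty} x^k A_{\vec{n},j}(x;\beta)\, |x|^\beta e^{-x^r}\, dx = 0$, and for $k = r(n+1)-1$ this sum equals $1$. -/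
open Finset in
/-- The polynomial `p_n(z; β)` (complex variable) for the Laguerre-Angelesco
polynomials on an `r`-star. -/
noncomputable def laPolyC (r n : ℕ) (β : ℝ) (z : ℂ) : ℂ :=
  ∑ k ∈ Finset.range (n + 1),
    ((n.choose k : ℂ) * (-1) ^ (n - k) / (Real.Gamma ((β + k) / r + 1) : ℂ)) * z ^ k

/-- The type I Laguerre-Angelesco polynomial `A_{𝐧,j}` on the diagonal
`𝐧 = (n+1,…,n+1)`. -/
noncomputable def laTypeI (r n : ℕ) (β : ℝ) (ω : ℂ) (j : ℕ) (z : ℂ) : ℂ :=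
  ((r : ℂ) ^ n / (n.factorial : ℂ)) * laPolyC r n β ((ω ^ (j - 1))⁻¹ * z)

open Finset MeasureTheory Set Polynomial

private lemma fd_pow : ∀ (n j : ℕ), j ≤ n →
    (fwdDiff (1:ℕ))^[n] (fun i : ℕ => (i:ℝ)^j) 0 = if j = n then (n.factorial : ℝ) else 0 := by
  intro n
  induction n with
  | zero =>
    intro j hj
    interval_cases j
    simp
  | succ n ih =>
    intro j hj
    rw [Function.iterate_succ_apply]
    have hΔ : fwdDiff (1:ℕ) (fun i : ℕ => (i:ℝ)^j)
        = ∑ l ∈ Finset.range j, (j.choose l : ℝ) • (fun i : ℕ => (i:ℝ)^l) := by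
      funext i
      simp only [fwdDiff, Finset.sum_apply, Pi.smul_apply, smul_eq_mul]
      have h1 : ((i + 1 : ℕ) : ℝ) = (i:ℝ) + 1 := by push_cast; ring
      rw [h1, add_pow]
      rw [Finset.sum_range_succ]
      simp only [one_pow, mul_one, Nat.choose_self, Nat.cast_one, Nat.sub_self, pow_zero]
      rw [add_sub_cancel_right]
      exact Finset.sum_congr rfl fun l hl => by ring
    rw [hΔ, fwdDiff_iter_finset_sum]
    simp only [Finset.sum_apply, fwdDiff_iter_const_smul, Pi.smul_apply, smul_eq_mul]
    have : ∀ l ∈ Finset.range j, (j.choose l : ℝ) * (fwdDiff (1:ℕ))^[n] (fun i : ℕ => (i:ℝ)^l) 0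
        = if l = n then (j.choose l : ℝ) * n.factorial else 0 := by
      intro l hl
      rw [ih l (by simp at hl; omega)]
      split <;> simp
    rw [Finset.sum_congr rfl this, Finset.sum_ite_eq' (Finset.range j) n]
    rcases eq_or_lt_of_le hj with h | h
    · subst h
      rw [if_pos (by simp), if_pos rfl, Nat.choose_succ_self_right]
      push_cast [Nat.factorial_succ]
      ring
    · rw [if_neg (by simp; omega), if_neg (by omega)]

private lemma fd_poly (n : ℕ) (P : Polynomial ℝ) (h : P.natDegree ≤ n) :
    (fwdDiff (1:ℕ))^[n] (fun i : ℕ => P.eval (i:ℝ)) 0 = n.factorial * P.coeff n := by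
  have hfun : (fun i : ℕ => P.eval (i:ℝ))
      = ∑ j ∈ Finset.range (n+1), P.coeff j • (fun i : ℕ => (i:ℝ)^j) := by
    funext i
    rw [Polynomial.eval_eq_sum_range' (Nat.lt_succ_of_le h)]
    simp [smul_eq_mul]
  rw [hfun, fwdDiff_iter_finset_sum]
  simp only [Finset.sum_apply, fwdDiff_iter_const_smul, Pi.smul_apply, smul_eq_mul]
  rw [Finset.sum_congr rfl (fun j hj => by
    rw [fd_pow n j (by simp at hj; omega)])]
  simp [mul_ite, Finset.sum_ite_eq']
  ring

private lemma alt_sum (n : ℕ) (P : Polynomial ℝ) (h : P.natDegree ≤ n) :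
    ∑ i ∈ Finset.range (n+1), (-1:ℝ)^(n-i) * (n.choose i) * P.eval (i:ℝ)
      = n.factorial * P.coeff n := by
  rw [← fd_poly n P h, fwdDiff_iter_eq_sum_shift]
  refine Finset.sum_congr rfl fun i _ => ?_
  simp only [zero_add, smul_eq_mul, zsmul_eq_mul]
  push_cast
  ring_nf

private lemma Gamma_add_nat' (x : ℝ) (hx : 0 < x) (d : ℕ) :
    Real.Gamma (x + d) = Real.Gamma x * ∏ l ∈ Finset.range d, (x + l) := by
  induction d with
  | zero => simp
  | succ d ih =>
    have : x + (d+1 : ℕ) = (x + d) + 1 := by push_cast; ring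
    rw [this, Real.Gamma_add_one (by positivity), ih, Finset.prod_range_succ]
    ring

private noncomputable def laF (r n : ℕ) (β : ℝ) (k : ℕ) (t : ℝ) : ℝ :=
  t^k * ((r:ℝ)^n / n.factorial * ∑ i ∈ Finset.range (n+1),
    ((n.choose i : ℝ) * (-1)^(n-i) / Real.Gamma ((β+i)/r+1)) * t^i) * t^β
    * Real.exp (-(t^r))

private noncomputable def laQ (r : ℕ) (β : ℝ) (d : ℕ) : Polynomial ℝ :=
  ∏ l ∈ Finset.range d,
    (Polynomial.C (1/(r:ℝ)) * Polynomial.X + Polynomial.C (β/r + 1 + l))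

private lemma laQ_natDegree_le (r : ℕ) (β : ℝ) (d : ℕ) : (laQ r β d).natDegree ≤ d := by
  refine (Polynomial.natDegree_prod_le _ _).trans ?_
  refine (Finset.sum_le_sum fun l _ => Polynomial.natDegree_linear_le).trans ?_
  simp

private lemma laF_integral (r n : ℕ) (hr : 1 ≤ r) (β : ℝ) (hβ : β > -1)
    (m : ℕ) (hm : 1 ≤ m) (hmn : m ≤ n + 1) :
    ∫ t in Set.Ioi (0:ℝ), laF r n β (r*m-1) t
      = (r:ℝ)^n / r * (laQ r β (m-1)).coeff n := by
  have hr0 : (0:ℝ) < r := by exact_mod_cast hr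
  have hrm : 1 ≤ r * m := Nat.one_le_iff_ne_zero.mpr (by positivity)
  set k := r * m - 1 with hk
  have hkc : (k : ℝ) + 1 = r * m := by
    have : (k + 1 : ℕ) = r * m := by omega
    exact_mod_cast congrArg (Nat.cast : ℕ → ℝ) this
  set d : ℕ → ℝ := fun i =>
    (r:ℝ)^n / n.factorial * ((n.choose i : ℝ) * (-1)^(n-i) / Real.Gamma ((β+i)/r+1))
    with hd
  have hy : ∀ i : ℕ, (0:ℝ) < (β+i)/r + 1 := by
    intro i
    have h1 : (-1:ℝ) < β + i := by
      have : (0:ℝ) ≤ i := Nat.cast_nonneg i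
      linarith
    have hr1 : (1:ℝ) ≤ r := by exact_mod_cast hr
    have : -1 < (β+i)/r := by
      rw [lt_div_iff₀ hr0]
      nlinarith
    linarith
  have step1 : ∫ t in Set.Ioi (0:ℝ), laF r n β k t
      = ∫ t in Set.Ioi (0:ℝ), ∑ i ∈ Finset.range (n+1),
          d i * (t ^ (((k+i:ℕ):ℝ) + β) * Real.exp (-t^(r:ℝ))) := by
    refine setIntegral_congr_fun measurableSet_Ioi fun t ht => ?_
    have ht' : (0:ℝ) < t := ht
    simp only [laF, Finset.mul_sum, Finset.sum_mul]
    refine Finset.sum_congr rfl fun i _ => ?_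
    have h1 : t^k * t^i = t ^ ((k+i:ℕ):ℝ) := by
      rw [← pow_add, ← Real.rpow_natCast]
    have h2 : t ^ ((k+i:ℕ):ℝ) * t^β = t ^ (((k+i:ℕ):ℝ) + β) := (Real.rpow_add ht' _ _).symm
    have h3 : t^r = t^((r:ℕ):ℝ) := (Real.rpow_natCast t r).symm
    rw [hd]
    rw [← h3]
    calc t ^ k * ((r:ℝ)^n / n.factorial * (((n.choose i : ℝ) * (-1)^(n-i) / Real.Gamma ((β+i)/r+1)) * t^i)) * t^β * Real.exp (-(t^r))
        = ((r:ℝ)^n / n.factorial * ((n.choose i : ℝ) * (-1)^(n-i) / Real.Gamma ((β+i)/r+1))) * ((t^k * t^i * t^β) * Real.exp (-(t^r))) := by ring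
      _ = _ := by rw [h1, h2]
  have hint : ∀ i ∈ Finset.range (n+1),
      Integrable (fun t : ℝ => d i * (t ^ (((k+i:ℕ):ℝ) + β) * Real.exp (-t^(r:ℝ))))
        (volume.restrict (Set.Ioi 0)) := by
    intro i _
    refine Integrable.const_mul ?_ _
    refine integrableOn_rpow_mul_exp_neg_rpow ?_ (by exact_mod_cast hr)
    have : (0:ℝ) ≤ ((k+i:ℕ):ℝ) := Nat.cast_nonneg _
    linarith
  rw [step1, integral_finset_sum _ hint]
  have step2 : ∀ i ∈ Finset.range (n+1),
      ∫ t in Set.Ioi (0:ℝ), d i * (t ^ (((k+i:ℕ):ℝ) + β) * Real.exp (-t^(r:ℝ)))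
        = ((r:ℝ)^n / n.factorial * (1/r)) *
            ((-1:ℝ)^(n-i) * (n.choose i) * (laQ r β (m-1)).eval (i:ℝ)) := by
    intro i _
    rw [integral_const_mul, integral_rpow_mul_exp_neg_rpow hr0 (by
      have : (0:ℝ) ≤ ((k+i:ℕ):ℝ) := Nat.cast_nonneg _
      linarith)]
    have harg : (((k+i:ℕ):ℝ) + β + 1) / r = ((β+i)/r + 1) + ((m-1 : ℕ):ℝ) := by
      have hm1 : ((m-1:ℕ):ℝ) = (m:ℝ) - 1 := by
        have : (m - 1 + 1 : ℕ) = m := by omega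
        have := congrArg (Nat.cast : ℕ → ℝ) this
        push_cast at this
        linarith
      have : ((k+i:ℕ):ℝ) = (k:ℝ) + i := by push_cast; ring
      rw [this, hm1]
      field_simp
      nlinarith [hkc]
    rw [harg, Gamma_add_nat' _ (hy i) (m-1)]
    have hΓ : Real.Gamma ((β+i)/r+1) ≠ 0 := (Real.Gamma_pos_of_pos (hy i)).ne'
    have heval : (laQ r β (m-1)).eval (i:ℝ)
        = ∏ l ∈ Finset.range (m-1), ((β+i)/r + 1 + l) := by
      simp only [laQ, Polynomial.eval_prod, Polynomial.eval_add, Polynomial.eval_mul,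
        Polynomial.eval_C, Polynomial.eval_X]
      refine Finset.prod_congr rfl fun l _ => ?_
      rw [add_div]
      ring
    rw [heval]
    simp only [hd]
    set P := ∏ l ∈ Finset.range (m-1), ((β+i)/r + 1 + (l:ℝ)) with hP
    set G := Real.Gamma ((β+i)/r+1) with hG
    field_simp
  rw [Finset.sum_congr rfl step2, ← Finset.mul_sum,
    alt_sum n (laQ r β (m-1)) ((laQ_natDegree_le r β (m-1)).trans (by omega))]
  have hn0 : (n.factorial : ℝ) ≠ 0 := by positivity
  field_simp

theorem stmt_11 (r n : ℕ) (hr : 1 ≤ r) (β : ℝ) (hβ : β > -1)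
    (ω : ℂ) (hω : ω = Complex.exp (2 * Real.pi * Complex.I / r)) :
    (∀ k : ℕ, k + 2 ≤ r * (n + 1) →
      ∑ j ∈ Finset.Icc 1 r,
        ∫ t in Set.Ioi (0 : ℝ),
          (ω ^ (j - 1)) ^ (k + 1) * (t : ℂ) ^ k * laTypeI r n β ω j (ω ^ (j - 1) * t) *
            ((t ^ β : ℝ) : ℂ) * ((Real.exp (-(t ^ r)) : ℝ) : ℂ) = 0) ∧
    (∑ j ∈ Finset.Icc 1 r,
        ∫ t in Set.Ioi (0 : ℝ),
          (ω ^ (j - 1)) ^ (r * (n + 1) - 1 + 1) * (t : ℂ) ^ (r * (n + 1) - 1) *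
            laTypeI r n β ω j (ω ^ (j - 1) * t) *
            ((t ^ β : ℝ) : ℂ) * ((Real.exp (-(t ^ r)) : ℝ) : ℂ) = 1) := by
  have hrne : r ≠ 0 := by omega
  have hprim : IsPrimitiveRoot ω r := hω ▸ Complex.isPrimitiveRoot_exp r hrne
  have hω0 : ω ≠ 0 := by rw [hω]; exact Complex.exp_ne_zero _
  have castlem : ∀ (k j : ℕ) (t : ℝ),
      (t:ℂ)^k * laTypeI r n β ω j (ω^(j-1)*t) * ((t^β:ℝ):ℂ) * ((Real.exp (-(t^r)):ℝ):ℂ)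
        = ((laF r n β k t : ℝ) : ℂ) := by
    intro k j t
    simp only [laTypeI, laPolyC, laF]
    rw [inv_mul_cancel_left₀ (pow_ne_zero _ hω0)]
    push_cast
    ring
  have hsum : ∀ k : ℕ,
      (∑ j ∈ Finset.Icc 1 r,
        ∫ t in Set.Ioi (0 : ℝ),
          (ω ^ (j - 1)) ^ (k + 1) * (t : ℂ) ^ k * laTypeI r n β ω j (ω ^ (j - 1) * t) *
            ((t ^ β : ℝ) : ℂ) * ((Real.exp (-(t ^ r)) : ℝ) : ℂ))
      = (∑ i ∈ Finset.range r, (ω^(k+1))^i) *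
          ((∫ t in Set.Ioi (0:ℝ), laF r n β k t : ℝ) : ℂ) := by
    intro k
    have hj : ∀ j : ℕ,
        (∫ t in Set.Ioi (0 : ℝ),
          (ω ^ (j - 1)) ^ (k + 1) * (t : ℂ) ^ k * laTypeI r n β ω j (ω ^ (j - 1) * t) *
            ((t ^ β : ℝ) : ℂ) * ((Real.exp (-(t ^ r)) : ℝ) : ℂ))
        = (ω^(k+1))^(j-1) * ((∫ t in Set.Ioi (0:ℝ), laF r n β k t : ℝ) : ℂ) := by
      intro j
      calc (∫ t in Set.Ioi (0 : ℝ),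
          (ω ^ (j - 1)) ^ (k + 1) * (t : ℂ) ^ k * laTypeI r n β ω j (ω ^ (j - 1) * t) *
            ((t ^ β : ℝ) : ℂ) * ((Real.exp (-(t ^ r)) : ℝ) : ℂ))
          = ∫ t in Set.Ioi (0:ℝ), (ω ^ (j - 1)) ^ (k + 1) * ((laF r n β k t : ℝ) : ℂ) := by
            refine integral_congr_ae (Filter.Eventually.of_forall fun t => ?_)
            dsimp only
            rw [← castlem k j t]
            ring
        _ = (ω ^ (j - 1)) ^ (k + 1) * ((∫ t in Set.Ioi (0:ℝ), laF r n β k t : ℝ) : ℂ) := by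
            rw [integral_const_mul]
            congr 1
            exact integral_ofReal
        _ = _ := by rw [pow_right_comm]
    rw [Finset.sum_congr rfl fun j _ => hj j, ← Finset.sum_mul]
    congr 1
    rw [show Finset.Icc 1 r = Finset.image (· + 1) (Finset.range r) from by
      ext x
      simp only [Finset.mem_Icc, Finset.mem_image, Finset.mem_range]
      constructor
      · rintro ⟨h1, h2⟩
        exact ⟨x - 1, by omega, by omega⟩
      · rintro ⟨a, ha, rfl⟩
        omega]
    rw [Finset.sum_image (by intro a _ b _ h; simp only at h; omega)]
    simp
  constructor
  · intro k hk
    rw [hsum k]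
    by_cases hdvd : r ∣ (k+1)
    · obtain ⟨m, hmm⟩ := hdvd
      have hm1 : 1 ≤ m := by
        rcases Nat.eq_zero_or_pos m with h | h
        · subst h
          simp at hmm
        · exact h
      have hmn : m ≤ n := by
        by_contra hcon
        have h1 : n + 1 ≤ m := by omega
        have h2 := Nat.mul_le_mul_left r h1
        omega
      have hkeq : k = r * m - 1 := by omega
      rw [hkeq, laF_integral r n hr β hβ m hm1 (by omega),
        Polynomial.coeff_eq_zero_of_natDegree_lt
          (lt_of_le_of_lt (laQ_natDegree_le r β (m-1)) (by omega))]
      simp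
    · have hne : ω^(k+1) ≠ 1 := fun h => hdvd ((hprim.pow_eq_one_iff_dvd _).mp h)
      rw [geom_sum_eq hne r, pow_right_comm, hprim.pow_eq_one]
      simp
  · rw [hsum (r*(n+1)-1)]
    have hk1 : r*(n+1)-1+1 = r*(n+1) := by
      have : 1 ≤ r * (n+1) := Nat.one_le_iff_ne_zero.mpr (by positivity)
      omega
    have hone : ω^(r*(n+1)-1+1) = 1 := by
      rw [hk1, pow_mul, hprim.pow_eq_one, one_pow]
    rw [hone]
    simp only [one_pow, Finset.sum_const, Finset.card_range, nsmul_eq_mul, mul_one]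
    have hkeq : r*(n+1)-1 = r*(n+1)-1 := rfl
    rw [laF_integral r n hr β hβ (n+1) (by omega) le_rfl]
    have hdeg : (laQ r β n).natDegree = n := by
      have h1r : (1/(r:ℝ)) ≠ 0 := by
        have : (0:ℝ) < r := by exact_mod_cast hr
        positivity
      have hfne : ∀ c : ℝ,
          (Polynomial.C (1/(r:ℝ)) * Polynomial.X + Polynomial.C c) ≠ 0 := by
        intro c h
        have := Polynomial.natDegree_linear (b := c) h1r
        rw [h] at this
        simp at this
      rw [laQ, Polynomial.natDegree_prod _ _ (fun l _ => hfne _),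
        Finset.sum_congr rfl fun l _ => Polynomial.natDegree_linear h1r]
      simp
    have hlc : (laQ r β n).coeff n = (1/(r:ℝ))^n := by
      have h1r : (1/(r:ℝ)) ≠ 0 := by
        have : (0:ℝ) < r := by exact_mod_cast hr
        positivity
      have : (laQ r β n).coeff n = (laQ r β n).leadingCoeff := by
        rw [Polynomial.leadingCoeff, hdeg]
      rw [this, laQ, Polynomial.leadingCoeff_prod]
      rw [Finset.prod_congr rfl fun l _ => Polynomial.leadingCoeff_linear h1r]
      simp
    have hsimp : (n+1-1 : ℕ) = n := rfl
    rw [hsimp, hlc]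
    have hr0 : (r:ℝ) ≠ 0 := by
      have : (0:ℝ) < r := by exact_mod_cast hr
      positivity
    have hval : (r:ℝ)^n / r * (1/(r:ℝ))^n = 1/r := by
      field_simp
      rw [← mul_pow, mul_one_div_cancel hr0, one_pow]
    rw [hval]
    push_cast
    rw [mul_one_div]
    rw [div_self (by exact_mod_cast hrne)]
end

section
/- Let $r \ge 1$, $\beta > -1$, and define for the diagonal multi-index $\vec{n} = (n,\dots,n)$ the polynomial $L_{\vec{n}}(x;\beta)$ by the Rodrigues formula $x^\beta e^{-x^r} L_{\vec{n}}(x;\beta) = \frac{(-1)^n}{r^n} \frac{d^n}{dx^n}\left[x^{\beta+n} e^{-x^r}\right]$ for $x>0$. Then $L_{\vec{n}}(x;\beta) = \frac{(-1)^n}{r^n} \sum_{\ell=0}^n \frac{x^{r\ell}}{\ell!} \sum_{k=0}^\ell \binom{\ell}{k} (rk+\beta+1)_n (-1)^k$. -/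
open Finset Set

noncomputable def Acoef (r : ℕ) (β : ℝ) (n ℓ : ℕ) : ℝ :=
  ∑ k ∈ Finset.range (ℓ + 1),
    (ℓ.choose k : ℝ) * (ascPochhammer ℝ n).eval ((r : ℝ) * k + β + 1) * (-1) ^ k

lemma Acoef_rec (r : ℕ) (β : ℝ) (n ℓ : ℕ) :
    Acoef r β (n + 1) ℓ
      = (β + n + 1) * Acoef r β n ℓ - r * ℓ * Acoef r (β + r) n (ℓ - 1) := by
  have h1 : Acoef r β (n + 1) ℓ
      = (β + n + 1) * Acoef r β n ℓ
        + r * ∑ k ∈ Finset.range (ℓ + 1),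
            (k : ℝ) * (ℓ.choose k : ℝ)
              * (ascPochhammer ℝ n).eval ((r : ℝ) * k + β + 1) * (-1) ^ k := by
    rw [Acoef, Acoef, Finset.mul_sum, Finset.mul_sum, ← Finset.sum_add_distrib]
    refine Finset.sum_congr rfl fun k _ => ?_
    rw [ascPochhammer_succ_eval]
    ring
  rw [h1]
  cases ℓ with
  | zero => simp
  | succ m =>
    have h2 : ∑ k ∈ Finset.range (m + 2),
          (k : ℝ) * ((m+1).choose k : ℝ)
            * (ascPochhammer ℝ n).eval ((r : ℝ) * k + β + 1) * (-1) ^ k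
        = -((m + 1 : ℝ) * Acoef r (β + r) n m) := by
      rw [Finset.sum_range_succ']
      simp only [Nat.cast_zero, zero_mul, add_zero]
      rw [Acoef, Finset.mul_sum, ← Finset.sum_neg_distrib]
      refine Finset.sum_congr rfl fun j _ => ?_
      have hch : ((j : ℝ) + 1) * ((m+1).choose (j+1) : ℝ) = ((m : ℝ) + 1) * (m.choose j : ℝ) := by
        have := Nat.add_one_mul_choose_eq m j
        have : ((m+1) * m.choose j : ℕ) = ((m+1).choose (j+1) * (j+1) : ℕ) := this
        have := congrArg (fun z : ℕ => (z : ℝ)) this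
        push_cast at this
        linarith [this]
      have harg : (r : ℝ) * (j + 1 : ℕ) + β + 1 = (r : ℝ) * j + (β + r) + 1 := by
        push_cast; ring
      rw [harg]
      push_cast
      linear_combination Polynomial.eval ((r : ℝ) * j + (β + (r:ℝ)) + 1) (ascPochhammer ℝ n)
        * (-1 : ℝ) ^ (j + 1) * hch
    rw [h2]
    push_cast
    ring

lemma Acoef_vanish (r : ℕ) : ∀ (n : ℕ) (β : ℝ) (ℓ : ℕ), n < ℓ → Acoef r β n ℓ = 0 := by
  intro n
  induction n with
  | zero =>
    intro β ℓ hℓ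
    have h0 : Acoef r β 0 ℓ = ∑ k ∈ Finset.range (ℓ + 1), (-1 : ℝ) ^ k * (ℓ.choose k : ℝ) := by
      rw [Acoef]
      refine Finset.sum_congr rfl fun k _ => ?_
      simp [ascPochhammer_zero]
      ring
    have hint : ((∑ i ∈ Finset.range (ℓ + 1), (-1 : ℤ) ^ i * (ℓ.choose i : ℤ) : ℤ) : ℝ) = 0 := by
      rw [Int.alternating_sum_range_choose_of_ne (by omega)]
      simp
    push_cast at hint
    rw [h0, hint]
  | succ n ih =>
    intro β ℓ hℓ
    rw [Acoef_rec, ih β ℓ (by omega), ih (β + r) (ℓ - 1) (by omega)]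
    ring

lemma sum_rec (r : ℕ) (n : ℕ) (β x : ℝ) :
    ∑ ℓ ∈ Finset.range (n + 2), x ^ (r * ℓ) / (ℓ.factorial : ℝ) * Acoef r β (n + 1) ℓ
      = (β + n + 1) * ∑ ℓ ∈ Finset.range (n + 1), x ^ (r * ℓ) / (ℓ.factorial : ℝ) * Acoef r β n ℓ
        - r * x ^ r *
            ∑ ℓ ∈ Finset.range (n + 1), x ^ (r * ℓ) / (ℓ.factorial : ℝ) * Acoef r (β + r) n ℓ := by
  have e1 : ∀ ℓ ∈ Finset.range (n + 2),
      x ^ (r * ℓ) / (ℓ.factorial : ℝ) * Acoef r β (n + 1) ℓ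
        = (β + n + 1) * (x ^ (r * ℓ) / (ℓ.factorial : ℝ) * Acoef r β n ℓ)
          - (r : ℝ) * ((ℓ : ℝ) * (x ^ (r * ℓ) / (ℓ.factorial : ℝ)) * Acoef r (β + r) n (ℓ - 1)) := by
    intro ℓ _
    rw [Acoef_rec]
    ring
  rw [Finset.sum_congr rfl e1, Finset.sum_sub_distrib]
  congr 1
  · rw [← Finset.mul_sum, Finset.sum_range_succ, Acoef_vanish r n β (n + 1) (by omega)]
    rw [mul_zero, add_zero]
  · rw [Finset.sum_range_succ']
    simp only [Nat.cast_zero, zero_mul, mul_zero, add_zero]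
    rw [Finset.mul_sum]
    refine Finset.sum_congr rfl fun j _ => ?_
    have hfac : (((j + 1).factorial : ℕ) : ℝ) = ((j : ℝ) + 1) * (j.factorial : ℝ) := by
      rw [Nat.factorial_succ]; push_cast; ring
    have hpow : x ^ (r * (j + 1)) = x ^ (r * j) * x ^ r := by
      rw [Nat.mul_succ, pow_add]
    have hj : ((j : ℝ) + 1) ≠ 0 := by positivity
    have hjf : (j.factorial : ℝ) ≠ 0 := by
      exact_mod_cast Nat.factorial_ne_zero j
    rw [hpow, hfac]
    have : j + 1 - 1 = j := rfl
    rw [this]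
    push_cast
    field_simp

lemma idw_eq (n : ℕ) (f : ℝ → ℝ) {x : ℝ} (hx : x ∈ Set.Ioi (0 : ℝ)) :
    iteratedDerivWithin n f (Set.Ioi 0) x = iteratedDeriv n f x := by
  simp only [iteratedDerivWithin, iteratedDeriv]
  rw [iteratedFDerivWithin_of_isOpen n isOpen_Ioi hx]

lemma contdiff_aux (r : ℕ) (β : ℝ) (n : ℕ) :
    ContDiffOn ℝ n (fun t : ℝ => t ^ β * Real.exp (-(t ^ r))) (Set.Ioi 0) := by
  refine ContDiffOn.mul (fun x hx => ?_) ?_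
  · exact (Real.contDiffAt_rpow_const_of_ne (ne_of_gt hx)).contDiffWithinAt
  · exact (((contDiff_id.pow r).neg).exp).contDiffOn

lemma key_s12 (r : ℕ) (hr : 1 ≤ r) :
    ∀ (n : ℕ) (β : ℝ), ∀ x : ℝ, 0 < x →
      iteratedDeriv n (fun t : ℝ => t ^ (β + n) * Real.exp (-(t ^ r))) x
        = x ^ β * Real.exp (-(x ^ r)) *
            ∑ ℓ ∈ Finset.range (n + 1), x ^ (r * ℓ) / (ℓ.factorial : ℝ) * Acoef r β n ℓ := by
  intro n
  induction n with
  | zero =>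
    intro β x hx
    simp [Acoef, ascPochhammer_zero]
  | succ n ih =>
    intro β x hx
    have hxm : x ∈ Set.Ioi (0 : ℝ) := hx
    rw [iteratedDeriv_succ']
    set E : ℝ → ℝ := fun t => Real.exp (-(t ^ r)) with hE
    have hg : (deriv (fun t : ℝ => t ^ (β + (n + 1 : ℕ)) * Real.exp (-(t ^ r))))
        =ᶠ[nhds x] (fun t => (β + n + 1) * (t ^ (β + (n : ℝ)) * Real.exp (-(t ^ r)))
            - (r : ℝ) * (t ^ ((β + r) + (n : ℝ)) * Real.exp (-(t ^ r)))) := by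
      filter_upwards [isOpen_Ioi.mem_nhds hxm] with t ht
      have ht' : (0 : ℝ) < t := ht
      have h1 : HasDerivAt (fun s : ℝ => s ^ (β + (n + 1 : ℕ)))
          ((β + (n + 1 : ℕ)) * t ^ (β + (n : ℝ))) t := by
        have h := Real.hasDerivAt_rpow_const (p := β + (n + 1 : ℕ)) (Or.inl ht'.ne')
        have e2 : β + ((n + 1 : ℕ) : ℝ) - 1 = β + (n : ℝ) := by push_cast; ring
        rwa [e2] at h
      have h2 : HasDerivAt (fun s : ℝ => Real.exp (-(s ^ r)))
          (Real.exp (-(t ^ r)) * (-((r : ℝ) * t ^ (r - 1)))) t :=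
        ((hasDerivAt_pow r t).neg).exp
      have hd : deriv (fun s : ℝ => s ^ (β + (n + 1 : ℕ)) * Real.exp (-(s ^ r))) t = _ :=
        (h1.mul h2).deriv
      rw [hd]
      have hpow : t ^ (β + (n + 1 : ℕ)) * t ^ (r - 1) = t ^ ((β + r) + (n : ℝ)) := by
        rw [← Real.rpow_natCast t (r - 1), ← Real.rpow_add ht']
        congr 1
        rw [Nat.cast_sub hr]
        push_cast
        ring
      have expand : (β + ((n + 1 : ℕ) : ℝ)) * t ^ (β + (n : ℝ)) * Real.exp (-(t ^ r))
            + t ^ (β + (n + 1 : ℕ)) * (Real.exp (-(t ^ r)) * (-((r : ℝ) * t ^ (r - 1))))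
          = (β + ((n + 1 : ℕ) : ℝ)) * (t ^ (β + (n : ℝ)) * Real.exp (-(t ^ r)))
            - (r : ℝ) * ((t ^ (β + (n + 1 : ℕ)) * t ^ (r - 1)) * Real.exp (-(t ^ r))) := by
        ring
      rw [expand, hpow]
      push_cast
      ring
    rw [Filter.EventuallyEq.iteratedDeriv_eq n hg]
    have huniq : UniqueDiffOn ℝ (Set.Ioi (0 : ℝ)) := isOpen_Ioi.uniqueDiffOn
    have hF1 : ContDiffOn ℝ n (fun t : ℝ => t ^ (β + (n : ℝ)) * Real.exp (-(t ^ r)))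
        (Set.Ioi 0) := contdiff_aux r _ n
    have hF2 : ContDiffOn ℝ n (fun t : ℝ => t ^ ((β + r) + (n : ℝ)) * Real.exp (-(t ^ r)))
        (Set.Ioi 0) := contdiff_aux r _ n
    have hA : ContDiffOn ℝ n
        (fun t : ℝ => (β + n + 1) * (t ^ (β + (n : ℝ)) * Real.exp (-(t ^ r))))
        (Set.Ioi 0) := ContDiffOn.mul contDiffOn_const hF1
    have hB : ContDiffOn ℝ n
        (fun t : ℝ => (r : ℝ) * (t ^ ((β + r) + (n : ℝ)) * Real.exp (-(t ^ r))))
        (Set.Ioi 0) := ContDiffOn.mul contDiffOn_const hF2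
    have hsplit : iteratedDeriv n
        (fun t : ℝ => (β + n + 1) * (t ^ (β + (n : ℝ)) * Real.exp (-(t ^ r)))
            - (r : ℝ) * (t ^ ((β + r) + (n : ℝ)) * Real.exp (-(t ^ r)))) x
        = (β + n + 1) * iteratedDeriv n
            (fun t : ℝ => t ^ (β + (n : ℝ)) * Real.exp (-(t ^ r))) x
          - (r : ℝ) * iteratedDeriv n
              (fun t : ℝ => t ^ ((β + r) + (n : ℝ)) * Real.exp (-(t ^ r))) x := by
      rw [← idw_eq n _ hxm, ← idw_eq n _ hxm, ← idw_eq n _ hxm]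
      rw [show (fun t : ℝ => (β + n + 1) * (t ^ (β + (n : ℝ)) * Real.exp (-(t ^ r)))
            - (r : ℝ) * (t ^ ((β + r) + (n : ℝ)) * Real.exp (-(t ^ r))))
          = (fun t : ℝ => (β + n + 1) * (t ^ (β + (n : ℝ)) * Real.exp (-(t ^ r))))
            - (fun t : ℝ => (r : ℝ) * (t ^ ((β + r) + (n : ℝ)) * Real.exp (-(t ^ r)))) from rfl]
      rw [iteratedDerivWithin_sub hxm huniq (hA x hxm) (hB x hxm),
        iteratedDerivWithin_const_mul hxm huniq _ (hF1 x hxm),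
        iteratedDerivWithin_const_mul hxm huniq _ (hF2 x hxm)]
    rw [hsplit, ih β x hx, ih (β + r) x hx]
    have hxr : x ^ (β + (r : ℝ)) = x ^ β * x ^ r := by
      rw [Real.rpow_add hx, Real.rpow_natCast]
    rw [hxr, sum_rec r n β x]
    ring

theorem stmt_12 (r n : ℕ) (hr : 1 ≤ r) (β : ℝ) (hβ : β > -1) (L : ℝ → ℝ)
    (hL : ∀ x : ℝ, 0 < x →
      x ^ β * Real.exp (-(x ^ r)) * L x
        = ((-1 : ℝ) ^ n / r ^ n) *
            iteratedDeriv n (fun t : ℝ => t ^ (β + n) * Real.exp (-(t ^ r))) x) :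
    ∀ x : ℝ, 0 < x →
      L x = ((-1 : ℝ) ^ n / r ^ n) *
        ∑ ℓ ∈ Finset.range (n + 1), x ^ (r * ℓ) / (ℓ.factorial : ℝ) *
          ∑ k ∈ Finset.range (ℓ + 1),
            (ℓ.choose k : ℝ) * (ascPochhammer ℝ n).eval ((r : ℝ) * k + β + 1) * (-1) ^ k := by
  intro x hx
  have h := hL x hx
  rw [key_s12 r hr n β x hx] at h
  have hne : x ^ β * Real.exp (-(x ^ r)) ≠ 0 :=
    mul_ne_zero (Real.rpow_pos_of_pos hx β).ne' (Real.exp_ne_zero _)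
  apply mul_left_cancel₀ hne
  rw [h]
  simp only [Acoef]
  ring
end

section
/- Let $r \ge 1$, $\beta > -1$, and let $L_{\vec{n}}(x;\beta)$ be defined by the Rodrigues formula $x^\beta e^{-x^r} L_{\vec{n}}(x;\beta) = \frac{(-1)^n}{r^n} \frac{d^n}{dx^n}[x^{\beta+n} e^{-x^r}]$. Then for every integer $k$ with $0 \le k \le n-1$, $\int_0^\infty x^k L_{\vec{n}}(x;\beta)\, x^\beta e^{-x^r}\, dx = 0$. -/
open Real MeasureTheory Set Filter Polynomial

noncomputable def stmtP (β : ℝ) (n r : ℕ) : ℕ → Polynomial ℝ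
  | 0 => 1
  | (j+1) => Polynomial.C (β + n - j) * stmtP β n r j + Polynomial.X * (stmtP β n r j).derivative
      - Polynomial.C (r : ℝ) * Polynomial.X ^ r * stmtP β n r j

noncomputable def stmtG (β : ℝ) (n r j : ℕ) (x : ℝ) : ℝ :=
  x ^ (β + n - j) * (stmtP β n r j).eval x * Real.exp (-(x ^ r))

lemma lemB (s : ℝ) {r : ℕ} (hr : 1 ≤ r) :
    Tendsto (fun x : ℝ => x ^ s * Real.exp (-(x ^ r))) atTop (nhds 0) := by
  have h := tendsto_rpow_mul_exp_neg_mul_atTop_nhds_zero s 1 one_pos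
  refine squeeze_zero' ?_ ?_ (by simpa using h)
  · filter_upwards [eventually_ge_atTop (1:ℝ)] with x hx
    positivity
  · filter_upwards [eventually_ge_atTop (1:ℝ)] with x hx
    have h1 : x ≤ x ^ r := le_self_pow₀ hx (by omega)
    have h2 : Real.exp (-(x ^ r)) ≤ Real.exp (-x) := by
      apply Real.exp_le_exp.mpr; linarith
    have h3 : (0:ℝ) ≤ x ^ s := Real.rpow_nonneg (by linarith) s
    exact mul_le_mul_of_nonneg_left h2 h3

lemma sumForm (c : ℝ) (q : Polynomial ℝ) (r : ℕ) :
    Set.EqOn (fun x : ℝ => x ^ c * q.eval x * Real.exp (-(x ^ r)))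
      (fun x : ℝ => ∑ i ∈ Finset.range (q.natDegree + 1),
        q.coeff i * (x ^ (c + i) * Real.exp (-(x ^ r)))) (Set.Ioi 0) := by
  intro x hx
  simp only [Polynomial.eval_eq_sum_range, Finset.sum_mul, Finset.mul_sum]
  refine Finset.sum_congr rfl fun i _ => ?_
  rw [Real.rpow_add hx, Real.rpow_natCast]
  ring

lemma lemTop (c : ℝ) (q : Polynomial ℝ) {r : ℕ} (hr : 1 ≤ r) :
    Tendsto (fun x : ℝ => x ^ c * q.eval x * Real.exp (-(x ^ r))) atTop (nhds 0) := by
  have heq : (fun x : ℝ => x ^ c * q.eval x * Real.exp (-(x ^ r))) =ᶠ[atTop]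
      (fun x : ℝ => ∑ i ∈ Finset.range (q.natDegree + 1),
        q.coeff i * (x ^ (c + i) * Real.exp (-(x ^ r)))) := by
    filter_upwards [eventually_gt_atTop (0:ℝ)] with x hx
    exact sumForm c q r hx
  refine Tendsto.congr' heq.symm ?_
  have : Tendsto (fun x : ℝ => ∑ i ∈ Finset.range (q.natDegree + 1),
      q.coeff i * (x ^ (c + i) * Real.exp (-(x ^ r)))) atTop
      (nhds (∑ i ∈ Finset.range (q.natDegree + 1), q.coeff i * 0)) := by
    exact tendsto_finset_sum _ fun i _ => (lemB (c + i) hr).const_mul _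
  simpa using this

lemma lemInt (c : ℝ) (hc : -1 < c) (q : Polynomial ℝ) {r : ℕ} (hr : 1 ≤ r) :
    IntegrableOn (fun x : ℝ => x ^ c * q.eval x * Real.exp (-(x ^ r))) (Set.Ioi 0) := by
  rw [integrableOn_congr_fun (sumForm c q r) measurableSet_Ioi]
  apply MeasureTheory.integrable_finset_sum
  intro i _
  have h1 : IntegrableOn (fun x : ℝ => x ^ (c + i) * Real.exp (-x ^ (r:ℝ))) (Set.Ioi 0) :=
    integrableOn_rpow_mul_exp_neg_rpow (by linarith) (by exact_mod_cast hr)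
  have h2 : IntegrableOn (fun x : ℝ => x ^ (c + i) * Real.exp (-(x ^ r))) (Set.Ioi 0) := by
    refine h1.congr_fun (fun x hx => ?_) measurableSet_Ioi
    simp only [Real.rpow_natCast]
  exact h2.const_mul _

lemma lemZero (c : ℝ) (hc : 0 < c) (q : Polynomial ℝ) (r : ℕ) :
    Tendsto (fun x : ℝ => x ^ c * q.eval x * Real.exp (-(x ^ r)))
      (nhdsWithin 0 (Set.Ioi 0)) (nhds 0) := by
  have h1 : Tendsto (fun x : ℝ => x ^ c) (nhdsWithin 0 (Set.Ioi 0)) (nhds 0) := by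
    have := (Real.continuousAt_rpow_const 0 c (Or.inr hc.le)).tendsto
    rw [Real.zero_rpow hc.ne'] at this
    exact this.mono_left nhdsWithin_le_nhds
  have h2 : Tendsto (fun x : ℝ => q.eval x * Real.exp (-(x ^ r)))
      (nhdsWithin 0 (Set.Ioi 0)) (nhds (q.eval 0 * Real.exp (-(0 ^ r)))) := by
    apply Tendsto.mono_left _ nhdsWithin_le_nhds
    exact (q.continuousAt.mul ((continuous_pow r).neg.rexp.continuousAt)).tendsto
  have := h1.mul h2
  simp only [zero_mul] at this
  refine this.congr fun x => by ring

lemma lemD (β : ℝ) (n : ℕ) {r : ℕ} (hr : 1 ≤ r) (j : ℕ) {x : ℝ} (hx : 0 < x) :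
    HasDerivAt (stmtG β n r j) (stmtG β n r (j+1) x) x := by
  have hA : HasDerivAt (fun t : ℝ => t ^ (β + n - j))
      ((β + n - j) * x ^ (β + n - j - 1)) x :=
    Real.hasDerivAt_rpow_const (Or.inl hx.ne')
  have hB := (stmtP β n r j).hasDerivAt x
  have hC : HasDerivAt (fun t : ℝ => Real.exp (-(t ^ r)))
      (Real.exp (-(x ^ r)) * -(r * x ^ (r - 1))) x := ((hasDerivAt_pow r x).neg).exp
  have h := (hA.mul hB).mul hC
  have h1 : x ^ (β + ↑n - ↑j) = x ^ (β + ↑n - ↑j - 1) * x := by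
    rw [← Real.rpow_add_one hx.ne']; congr 1; ring
  have h2 : x ^ r = x ^ (r - 1) * x := by
    conv_lhs => rw [show r = (r-1)+1 by omega]
    rw [pow_succ]
  convert h using 1
  show x ^ (β + ↑n - ↑(j+1)) * (stmtP β n r (j+1)).eval x * Real.exp (-(x^r)) = _
  rw [show (β + ↑n - ↑(j+1) : ℝ) = β + ↑n - ↑j - 1 by push_cast; ring]
  simp only [stmtP, Polynomial.eval_sub, Polynomial.eval_add, Polynomial.eval_mul,
    Polynomial.eval_C, Polynomial.eval_X, Polynomial.eval_pow]
  simp only [Pi.mul_apply]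
  rw [h1, h2]
  ring
  all_goals rfl

lemma lemC (β : ℝ) (n : ℕ) {r : ℕ} (hr : 1 ≤ r) (j : ℕ) :
    ∀ x : ℝ, 0 < x →
      iteratedDeriv j (fun t : ℝ => t ^ (β + n) * Real.exp (-(t ^ r))) x = stmtG β n r j x := by
  induction j with
  | zero =>
    intro x hx
    simp [stmtG, stmtP, iteratedDeriv_zero]
  | succ j ih =>
    intro x hx
    rw [iteratedDeriv_succ]
    have heq : iteratedDeriv j (fun t : ℝ => t ^ (β + n) * Real.exp (-(t ^ r)))
        =ᶠ[nhds x] stmtG β n r j :=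
      Filter.eventuallyEq_of_mem (isOpen_Ioi.mem_nhds hx) fun y hy => ih y hy
    rw [heq.deriv_eq]
    exact (lemD β n hr j hx).deriv

lemma lemInt2 (β : ℝ) (hβ : β > -1) (n : ℕ) {r : ℕ} (hr : 1 ≤ r) (m j : ℕ) (hj : j ≤ n) :
    IntegrableOn (fun x : ℝ => x ^ m * stmtG β n r j x) (Set.Ioi 0) := by
  have key : -1 < β + n - j + m := by
    have : (j:ℝ) ≤ n := Nat.cast_le.mpr hj
    have : (0:ℝ) ≤ m := Nat.cast_nonneg m
    linarith
  refine (lemInt _ key (stmtP β n r j) hr).congr_fun (fun x hx => ?_) measurableSet_Ioi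
  simp only [stmtG]
  rw [show β + ↑n - ↑j + ↑m = ↑m + (β + ↑n - ↑j) by ring, Real.rpow_add hx,
    Real.rpow_natCast]
  ring

lemma lemIBP (β : ℝ) (hβ : β > -1) (n : ℕ) {r : ℕ} (hr : 1 ≤ r) (k j : ℕ) (hj : j < n) :
    ∫ x in Set.Ioi (0:ℝ),
      ((k:ℝ) * x ^ (k-1) * stmtG β n r j x + x ^ k * stmtG β n r (j+1) x) = 0 := by
  set f : ℝ → ℝ := fun x => x ^ k * stmtG β n r j x with hf
  have hepos : (0:ℝ) < β + n - j := by
    have : (j:ℝ) + 1 ≤ n := by exact_mod_cast hj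
    linarith
  have hf0 : f 0 = 0 := by
    simp only [hf, stmtG]
    rw [Real.zero_rpow hepos.ne']
    ring
  have hderiv : ∀ x ∈ Set.Ioi (0:ℝ), HasDerivAt f
      ((k:ℝ) * x ^ (k-1) * stmtG β n r j x + x ^ k * stmtG β n r (j+1) x) x :=
    fun x hx => (hasDerivAt_pow k x).mul (lemD β n hr j hx)
  have hint : IntegrableOn (fun x : ℝ =>
      (k:ℝ) * x ^ (k-1) * stmtG β n r j x + x ^ k * stmtG β n r (j+1) x) (Set.Ioi 0) := by
    refine MeasureTheory.Integrable.add ?_ (lemInt2 β hβ n hr k (j+1) hj)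
    have h2 : IntegrableOn (fun x : ℝ => (k:ℝ) * (x ^ (k-1) * stmtG β n r j x)) (Set.Ioi 0) :=
      (lemInt2 β hβ n hr (k-1) j hj.le).const_mul (k:ℝ)
    refine h2.congr_fun (fun x _ => by ring) measurableSet_Ioi
  have htendzero : Tendsto f (nhdsWithin 0 (Set.Ioi 0)) (nhds 0) := by
    have h := lemZero (β + n - j + k) (by positivity) (stmtP β n r j) r
    refine h.congr' ?_
    filter_upwards [self_mem_nhdsWithin] with x (hx : (0:ℝ) < x)
    simp only [hf, stmtG]
    rw [show β + ↑n - ↑j + ↑k = ↑k + (β + ↑n - ↑j) by ring, Real.rpow_add hx,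
      Real.rpow_natCast]
    ring
  have hcont : ContinuousWithinAt f (Set.Ici 0) 0 := by
    rw [← continuousWithinAt_Ioi_iff_Ici]
    unfold ContinuousWithinAt
    rw [hf0]
    exact htendzero
  have htop : Tendsto f atTop (nhds 0) := by
    have h := lemTop (β + n - j + k) (stmtP β n r j) hr
    refine h.congr' ?_
    filter_upwards [eventually_gt_atTop (0:ℝ)] with x hx
    simp only [hf, stmtG]
    rw [show β + ↑n - ↑j + ↑k = ↑k + (β + ↑n - ↑j) by ring, Real.rpow_add hx,
      Real.rpow_natCast]
    ring
  have := integral_Ioi_of_hasDerivAt_of_tendsto hcont hderiv hint htop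
  rw [hf0, sub_zero] at this
  exact this

lemma lemS (β : ℝ) (hβ : β > -1) (n : ℕ) {r : ℕ} (hr : 1 ≤ r) :
    ∀ k j : ℕ, k < j → j ≤ n →
      ∫ x in Set.Ioi (0:ℝ), x ^ k * stmtG β n r j x = 0 := by
  intro k
  induction k with
  | zero =>
    intro j hkj hjn
    obtain ⟨j', rfl⟩ : ∃ j', j = j' + 1 := ⟨j - 1, by omega⟩
    have hI := lemIBP β hβ n hr 0 j' (by omega)
    simpa using hI
  | succ k ih =>
    intro j hkj hjn
    obtain ⟨j', rfl⟩ : ∃ j', j = j' + 1 := ⟨j - 1, by omega⟩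
    have hI := lemIBP β hβ n hr (k+1) j' (by omega)
    have intA : IntegrableOn (fun x : ℝ => ((k+1:ℕ):ℝ) * x ^ (k+1-1) * stmtG β n r j' x)
        (Set.Ioi 0) := by
      have h2 : IntegrableOn (fun x : ℝ => ((k+1:ℕ):ℝ) * (x ^ k * stmtG β n r j' x))
          (Set.Ioi 0) := (lemInt2 β hβ n hr k j' (by omega)).const_mul ((k+1:ℕ):ℝ)
      refine h2.congr_fun (fun x _ => by push_cast; ring) measurableSet_Ioi
    have intB := lemInt2 β hβ n hr (k+1) (j'+1) hjn
    rw [MeasureTheory.integral_add intA intB] at hI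
    have hA : ∫ x in Set.Ioi (0:ℝ), ((k+1:ℕ):ℝ) * x ^ (k+1-1) * stmtG β n r j' x = 0 := by
      have heq : ∀ x : ℝ, ((k+1:ℕ):ℝ) * x ^ (k+1-1) * stmtG β n r j' x
          = ((k+1:ℕ):ℝ) * (x ^ k * stmtG β n r j' x) := fun x => by push_cast; ring
      simp_rw [heq]
      rw [MeasureTheory.integral_const_mul, ih j' (by omega) (by omega), mul_zero]
    rw [hA, zero_add] at hI
    exact hI

theorem stmt_13 (r n : ℕ) (hr : 1 ≤ r) (β : ℝ) (hβ : β > -1) (L : ℝ → ℝ)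
    (hL : ∀ x : ℝ, 0 < x →
      x ^ β * Real.exp (-(x ^ r)) * L x
        = ((-1 : ℝ) ^ n / r ^ n) *
            iteratedDeriv n (fun t : ℝ => t ^ (β + n) * Real.exp (-(t ^ r))) x) :
    ∀ k : ℕ, k < n →
      ∫ x in Set.Ioi (0 : ℝ), x ^ k * L x * x ^ β * Real.exp (-(x ^ r)) = 0 := by
  intro k hk
  have heq : Set.EqOn (fun x : ℝ => x ^ k * L x * x ^ β * Real.exp (-(x ^ r)))
      (fun x : ℝ => ((-1 : ℝ) ^ n / r ^ n) * (x ^ k * stmtG β n r n x)) (Set.Ioi 0) := by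
    intro x hx
    have h := hL x hx
    rw [lemC β n hr n x hx] at h
    simp only
    calc x ^ k * L x * x ^ β * Real.exp (-(x ^ r))
        = x ^ k * (x ^ β * Real.exp (-(x ^ r)) * L x) := by ring
      _ = x ^ k * (((-1 : ℝ) ^ n / r ^ n) * stmtG β n r n x) := by rw [h]
      _ = ((-1 : ℝ) ^ n / r ^ n) * (x ^ k * stmtG β n r n x) := by ring
  rw [MeasureTheory.setIntegral_congr_fun measurableSet_Ioi heq,
    MeasureTheory.integral_const_mul, lemS β hβ n hr k n hk le_rfl, mul_zero]
end

section
/- Let $r \ge 1$ and $\beta > 0$, and let $L_{n\vec{1}}(x;\beta)$ denote the diagonal type II Laguerre-Angelesco polynomial given by $x^\beta e^{-x^r} L_{n\vec{1}}(x;\beta) = \frac{(-1)^n}{r^n}\frac{d^n}{dx^n}[x^{\beta+n} e^{-x^r}]$. Then the raising relation holds: $\frac{d}{dx}\left[x^\beta e^{-x^r} L_{n\vec{1}}(x;\beta)\right] = -r\, x^{\beta-1} e^{-x^r}\, L_{(n+1)\vec{1}}(x;\beta-1)$ for all $x > 0$. -/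
theorem stmt_15 (r n : ℕ) (hr : 1 ≤ r) (β : ℝ) (hβ : β > 0) (Ln Ln1 : ℝ → ℝ)
    (hLn : ∀ x : ℝ, 0 < x →
      x ^ β * Real.exp (-(x ^ r)) * Ln x
        = ((-1 : ℝ) ^ n / r ^ n) *
            iteratedDeriv n (fun t : ℝ => t ^ (β + n) * Real.exp (-(t ^ r))) x)
    (hLn1 : ∀ x : ℝ, 0 < x →
      x ^ (β - 1) * Real.exp (-(x ^ r)) * Ln1 x
        = ((-1 : ℝ) ^ (n + 1) / r ^ (n + 1)) *
            iteratedDeriv (n + 1)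
              (fun t : ℝ => t ^ (β - 1 + (n + 1)) * Real.exp (-(t ^ r))) x) :
    ∀ x : ℝ, 0 < x →
      deriv (fun t : ℝ => t ^ β * Real.exp (-(t ^ r)) * Ln t) x
        = -r * x ^ (β - 1) * Real.exp (-(x ^ r)) * Ln1 x := by
  intro x hx
  have hfeq : (fun t : ℝ => t ^ (β - 1 + ((n : ℝ) + 1)) * Real.exp (-(t ^ r)))
      = (fun t : ℝ => t ^ (β + n) * Real.exp (-(t ^ r))) := by
    funext t
    have h : β - 1 + ((n : ℝ) + 1) = β + (n : ℝ) := by ring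
    rw [h]
  have hev : (fun t : ℝ => t ^ β * Real.exp (-(t ^ r)) * Ln t) =ᶠ[nhds x]
      (fun t : ℝ => ((-1 : ℝ) ^ n / r ^ n) *
        iteratedDeriv n (fun t : ℝ => t ^ (β + n) * Real.exp (-(t ^ r))) t) := by
    filter_upwards [Ioi_mem_nhds hx] with t ht using hLn t ht
  rw [hev.deriv_eq, deriv_const_mul_field, ← iteratedDeriv_succ]
  have h1 := hLn1 x hx
  rw [hfeq] at h1
  have hr0 : (r : ℝ) ≠ 0 := by positivity
  have key : -(r : ℝ) * (((-1 : ℝ) ^ (n + 1) / r ^ (n + 1)) *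
      iteratedDeriv (n + 1) (fun t : ℝ => t ^ (β + n) * Real.exp (-(t ^ r))) x)
      = ((-1 : ℝ) ^ n / r ^ n) *
        iteratedDeriv (n + 1) (fun t : ℝ => t ^ (β + n) * Real.exp (-(t ^ r))) x := by
    field_simp
    ring
  calc ((-1 : ℝ) ^ n / r ^ n) *
        iteratedDeriv (n + 1) (fun t : ℝ => t ^ (β + n) * Real.exp (-(t ^ r))) x
      = -(r : ℝ) * (x ^ (β - 1) * Real.exp (-(x ^ r)) * Ln1 x) := by rw [h1, key]
    _ = -r * x ^ (β - 1) * Real.exp (-(x ^ r)) * Ln1 x := by ring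
end
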